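/- Let n ≥ 3 and let a = Σ_{p≠q} a_{p,q} e_{p,q} ∈ E¹ satisfy: a_{r,s} = 0 whenever {r,s} ⊄ {1,2,3}; a_{2,1} ≠ 0; a_{p,q} ≠ 0 for some ordered pair (p,q) with {p,q} ⊂ {1,2,3} and {p,q} ≠ {1,2}; and at least one of a_{2,1} + a_{3,1}, a_{1,2} + a_{3,2}, a_{1,3} + a_{2,3} is nonzero. Then the map ψ_a : I² → E³, x ↦ a·x, is injective, where I² = I ∩ E². -/

import Mathlib

noncomputable section

open ExteriorAlgebra

/-- Index set for the generators `e_{p,q}`, `p ≠ q`, of the exterior algebra `E`. -/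
abbrev RIdx (n : ℕ) := {pq : Fin n × Fin n // pq.1 ≠ pq.2}

/-- The exterior algebra `E` on the vector space with basis `{e_{p,q} : p ≠ q}`. -/
abbrev Egen (k : Type) [Field k] (n : ℕ) := ExteriorAlgebra k (RIdx n →₀ k)

/-- The degree-one generator `e_{p,q}` of `E`. -/
def egen (k : Type) [Field k] {n : ℕ} (p q : Fin n) (h : p ≠ q) : Egen k n :=
  ExteriorAlgebra.ι k (Finsupp.single (⟨(p, q), h⟩ : RIdx n) (1 : k))

/-- The degree-one generator `e_{p,q}` indexed by an element of `RIdx n`. -/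
def egen' (k : Type) [Field k] {n : ℕ} (x : RIdx n) : Egen k n :=
  ExteriorAlgebra.ι k (Finsupp.single x (1 : k))

/-- The generators `η_{i,j} = e_{i,j} e_{j,i}` (for `i < j`) and
`τ^m_{i,j} = (e_{m,i} - e_{j,i})(e_{m,j} - e_{i,j})` (for `i < j`, `m ∉ {i,j}`)
of the ideal `I`. -/
def resGens (k : Type) [Field k] (n : ℕ) : Set (Egen k n) :=
  {x | ∃ (i j : Fin n) (hij : i < j),
      x = egen k i j hij.ne * egen k j i hij.ne'} ∪
  {x | ∃ (i j m : Fin n) (hij : i < j) (hmi : m ≠ i) (hmj : m ≠ j),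
      x = (egen k m i hmi - egen k j i hij.ne') * (egen k m j hmj - egen k i j hij.ne)}

/-- The two-sided ideal `I` of `E` generated by the `η`'s and `τ`'s. -/
def resIdeal (k : Type) [Field k] (n : ℕ) : TwoSidedIdeal (Egen k n) :=
  TwoSidedIdeal.span (resGens k n)

/-- The quotient algebra `A = E/I`, i.e. `H^*(PΣ_n; k)`. -/
abbrev resA (k : Type) [Field k] (n : ℕ) := (resIdeal k n).ringCon.Quotient

/-- The quotient map `π : E → A = E/I` as a `k`-algebra homomorphism. -/
def resπ (k : Type) [Field k] (n : ℕ) : Egen k n →ₐ[k] resA k n :=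
  { (resIdeal k n).ringCon.mk' with commutes' := fun _ => rfl }

/-- The degree-`m` graded piece `A^m` of `A = E/I`: the image of `E^m = ⋀^m` in `A`. -/
def resAmod (k : Type) [Field k] (n : ℕ) (m : ℕ) : Submodule k (resA k n) :=
  Submodule.map (resπ k n).toLinearMap (⋀[k]^m (RIdx n →₀ k))

/-- The first resonance variety `R¹ = {a ∈ A¹ : H¹(A, δ_a) ≠ 0}`:  `H¹(A,δ_a) ≠ 0` iff some
`x ∈ A¹ = ker(δ_a : A¹ → A²)`-element with `a·x = 0` is not in the image of `δ_a : A⁰ → A¹`. -/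
def resR1 (k : Type) [Field k] (n : ℕ) : Set (resA k n) :=
  {a | a ∈ resAmod k n 1 ∧
    ∃ x ∈ resAmod k n 1, a * x = 0 ∧
      x ∉ Submodule.map (LinearMap.mulLeft k a) (resAmod k n 0)}

/-- The subspace `C_{i,j} = span{e_{i,j}, e_{j,i}}` of `A¹`. -/
def resC2 (k : Type) [Field k] (n : ℕ) (i j : Fin n) (hij : i ≠ j) :
    Submodule k (resA k n) :=
  Submodule.span k {resπ k n (egen k i j hij), resπ k n (egen k j i hij.symm)}

/-- The subspace `C_{i,j,m} = span{e_{j,i} − e_{m,i}, e_{i,j} − e_{m,j}, e_{i,m} − e_{j,m}}`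
of `A¹`. -/
def resC3 (k : Type) [Field k] (n : ℕ) (i j m : Fin n)
    (hij : i ≠ j) (him : i ≠ m) (hjm : j ≠ m) : Submodule k (resA k n) :=
  Submodule.span k {resπ k n (egen k j i hij.symm - egen k m i him.symm),
                    resπ k n (egen k i j hij - egen k m j hjm.symm),
                    resπ k n (egen k i m him - egen k j m hjm)}

/-- The two-sided ideal `I`, viewed as a `k`-subspace of `E`. -/
def resIdealSub (k : Type) [Field k] (n : ℕ) : Submodule k (Egen k n) where
  carrier := resIdeal k n
  add_mem' := (resIdeal k n).add_mem
  zero_mem' := (resIdeal k n).zero_mem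
  smul_mem' c x hx := by
    have h := (resIdeal k n).mul_mem_left (algebraMap k (Egen k n) c) x hx
    simpa [Algebra.smul_def] using h

/-- The degree-two part `I² = I ∩ E²` of the ideal `I`, as a `k`-subspace of `E`. -/
def resI2 (k : Type) [Field k] (n : ℕ) : Submodule k (Egen k n) :=
  resIdealSub k n ⊓ ⋀[k]^2 (RIdx n →₀ k)

/-- The map `ψ_a : I² → E` (with image in `E³` when `a ∈ E¹`), `x ↦ a·x`. -/
def resPsi (k : Type) [Field k] (n : ℕ) (a : Egen k n) : resI2 k n →ₗ[k] Egen k n :=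
  (LinearMap.mulLeft k a).comp (resI2 k n).subtype

end
namespace Case2Aux

variable {k : Type} [Field k] {n : ℕ}

/-- The constant-term functional. -/
noncomputable def eps : Egen k n →ₐ[k] k := ExteriorAlgebra.algebraMapInv

/-- Left contraction by a dual vector. -/
noncomputable def cL (d : Module.Dual k (RIdx n →₀ k)) : Egen k n →ₗ[k] Egen k n :=
  CliffordAlgebra.contractLeft (Q := (0 : QuadraticForm k (RIdx n →₀ k))) d

lemma eps_ι (v : RIdx n →₀ k) : eps (ExteriorAlgebra.ι k v) = 0 := by
  simp [eps, ExteriorAlgebra.algebraMapInv]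

lemma eps_algebraMap (r : k) : eps (algebraMap k (Egen k n) r) = r :=
  ExteriorAlgebra.algebraMap_leftInverse _ r

lemma eps_one : eps (1 : Egen k n) = 1 := map_one _

lemma eps_smul (r : k) (x : Egen k n) : eps (r • x) = r * eps x := by
  rw [map_smul, smul_eq_mul]

lemma eps_involute (x : Egen k n) : eps (CliffordAlgebra.involute x) = eps x := by
  induction x using ExteriorAlgebra.induction with
  | algebraMap r => rw [AlgHom.commutes]
  | ι v => rw [CliffordAlgebra.involute_ι, map_neg, eps_ι, neg_zero]
  | mul a b ha hb => rw [map_mul, map_mul, map_mul, ha, hb]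
  | add a b ha hb => rw [map_add, map_add, map_add, ha, hb]

lemma cL_ι_mul (d : Module.Dual k (RIdx n →₀ k)) (v : RIdx n →₀ k) (x : Egen k n) :
    cL d (ExteriorAlgebra.ι k v * x) = d v • x - ExteriorAlgebra.ι k v * cL d x :=
  CliffordAlgebra.contractLeft_ι_mul _ _ _

lemma cL_ι (d : Module.Dual k (RIdx n →₀ k)) (v : RIdx n →₀ k) :
    cL d (ExteriorAlgebra.ι k v) = algebraMap k (Egen k n) (d v) :=
  CliffordAlgebra.contractLeft_ι _ _ _

lemma cL_algebraMap (d : Module.Dual k (RIdx n →₀ k)) (r : k) :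
    cL d (algebraMap k (Egen k n) r) = 0 :=
  CliffordAlgebra.contractLeft_algebraMap _ _ _

/-- Contraction is a twisted derivation. -/
lemma cL_mul (d : Module.Dual k (RIdx n →₀ k)) (x y : Egen k n) :
    cL d (x * y) = cL d x * y + CliffordAlgebra.involute x * cL d y := by
  induction x using ExteriorAlgebra.induction generalizing y with
  | algebraMap r =>
      rw [cL_algebraMap, AlgHom.commutes, zero_mul, zero_add, ← Algebra.smul_def, map_smul,
        ← Algebra.smul_def]
  | ι v =>
      rw [cL_ι_mul, cL_ι, CliffordAlgebra.involute_ι, Algebra.smul_def, neg_mul, sub_eq_add_neg]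
  | mul a b ha hb =>
      rw [mul_assoc, ha, hb, ha b,
        show CliffordAlgebra.involute (a * b) = CliffordAlgebra.involute a *
          CliffordAlgebra.involute b from map_mul _ _ _]
      noncomm_ring
  | add a b ha hb =>
      rw [add_mul, map_add, ha, hb,
        show CliffordAlgebra.involute (a + b) = CliffordAlgebra.involute a +
          CliffordAlgebra.involute b from map_add _ _ _, map_add]
      noncomm_ring

end Case2Aux
namespace Case2Aux

variable {k : Type} [Field k] {n : ℕ}

/-- Coordinate functional on the base vector space. -/
noncomputable def ph (γ : RIdx n) : Module.Dual k (RIdx n →₀ k) := Finsupp.lapply γ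

@[simp] lemma ph_apply (γ : RIdx n) (s : RIdx n →₀ k) : ph γ s = s γ := rfl

/-- The degree-2 coordinate functional. -/
noncomputable def Cf (α β : RIdx n) (x : Egen k n) : k := eps (cL (ph β) (cL (ph α) x))

lemma Cf_add (α β : RIdx n) (x y : Egen k n) : Cf α β (x + y) = Cf α β x + Cf α β y := by
  simp [Cf, map_add]

lemma Cf_neg (α β : RIdx n) (x : Egen k n) : Cf α β (-x) = -Cf α β x := by
  simp [Cf, map_neg]

lemma Cf_zero (α β : RIdx n) : Cf α β (0 : Egen k n) = 0 := by simp [Cf]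

lemma mul_algebraMap_eq_smul (x : Egen k n) (r : k) :
    x * algebraMap k (Egen k n) r = r • x := by
  rw [← Algebra.commutes, ← Algebra.smul_def]

lemma eps_cL_mul (d : Module.Dual k (RIdx n →₀ k)) (x y : Egen k n) :
    eps (cL d (x * y)) = eps (cL d x) * eps y + eps x * eps (cL d y) := by
  rw [cL_mul, map_add, map_mul, map_mul, eps_involute]

lemma Cf_mul (α β : RIdx n) (x y : Egen k n) :
    Cf α β (x * y) = Cf α β x * eps y + eps (cL (ph α) x) * eps (cL (ph β) y)
      + eps (cL (ph β) (CliffordAlgebra.involute x)) * eps (cL (ph α) y)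
      + eps x * Cf α β y := by
  simp only [Cf, cL_mul, map_add, map_mul, eps_involute, CliffordAlgebra.involute_involute]
  ring

lemma Cf_ιι (α β : RIdx n) (s t : RIdx n →₀ k) :
    Cf α β (ExteriorAlgebra.ι k s * ExteriorAlgebra.ι k t) = s α * t β - t α * s β := by
  simp only [Cf, cL_ι_mul, cL_ι, mul_algebraMap_eq_smul, map_sub, map_smul, eps_smul,
    eps_algebraMap, eps_ι, smul_eq_mul, cL_algebraMap, ph_apply]

lemma eps_ιι (s t : RIdx n →₀ k) :
    eps (ExteriorAlgebra.ι k s * ExteriorAlgebra.ι k t) = 0 := by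
  simp [map_mul, eps_ι]

lemma eps_cL_ιι (d : Module.Dual k (RIdx n →₀ k)) (s t : RIdx n →₀ k) :
    eps (cL d (ExteriorAlgebra.ι k s * ExteriorAlgebra.ι k t)) = 0 := by
  simp [cL_ι_mul, cL_ι, mul_algebraMap_eq_smul, map_sub, map_smul, eps_smul, eps_ι]

lemma invol_ιι (s t : RIdx n →₀ k) :
    CliffordAlgebra.involute (ExteriorAlgebra.ι k s * ExteriorAlgebra.ι k t) =
      ExteriorAlgebra.ι k s * ExteriorAlgebra.ι k t := by
  rw [map_mul, CliffordAlgebra.involute_ι, CliffordAlgebra.involute_ι, neg_mul_neg]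

/-- Singleton basis vector. -/
noncomputable def sgl (p q : Fin n) (h : p ≠ q) : RIdx n →₀ k :=
  Finsupp.single (⟨(p, q), h⟩ : RIdx n) (1 : k)

lemma egen_eq (p q : Fin n) (h : p ≠ q) :
    egen k p q h = ExteriorAlgebra.ι k (sgl p q h) := rfl

/-- Every generator is a product of two degree-one elements. -/
lemma gens_eq : ∀ g ∈ resGens k n, ∃ s t : RIdx n →₀ k,
    g = ExteriorAlgebra.ι k s * ExteriorAlgebra.ι k t := by
  rintro g (⟨i, j, hij, rfl⟩ | ⟨i, j, m, hij, hmi, hmj, rfl⟩)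
  · exact ⟨sgl i j hij.ne, sgl j i hij.ne', rfl⟩
  · exact ⟨sgl m i hmi - sgl j i hij.ne', sgl m j hmj - sgl i j hij.ne, by
      rw [map_sub, map_sub]; rfl⟩

/-- Functionals of the given shape vanishing on the generators vanish on the ideal. -/
lemma ideal_ann (α1 β1 α2 β2 : RIdx n) (c : k)
    (hg : ∀ g ∈ resGens k n, Cf α1 β1 g + c * Cf α2 β2 g = 0) :
    ∀ x ∈ resIdeal k n, Cf α1 β1 x + c * Cf α2 β2 x = 0 := by
  have key : ∀ x ∈ resIdeal k n, eps x = 0 ∧ (∀ d, eps (cL d x) = 0) ∧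
      (∀ d, eps (cL d (CliffordAlgebra.involute x)) = 0) ∧
      (Cf α1 β1 x + c * Cf α2 β2 x = 0) ∧
      (Cf α1 β1 (CliffordAlgebra.involute x) + c * Cf α2 β2 (CliffordAlgebra.involute x) = 0) := by
    intro x hx
    let S : Set (Egen k n) := {x | eps x = 0 ∧ (∀ d, eps (cL d x) = 0) ∧
      (∀ d, eps (cL d (CliffordAlgebra.involute x)) = 0) ∧
      (Cf α1 β1 x + c * Cf α2 β2 x = 0) ∧
      (Cf α1 β1 (CliffordAlgebra.involute x) + c * Cf α2 β2 (CliffordAlgebra.involute x) = 0)}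
    have hzero : (0 : Egen k n) ∈ S := by
      refine ⟨map_zero _, fun d => by simp, fun d => by simp, by simp [Cf_zero], by simp [Cf_zero]⟩
    have hadd : ∀ {x y : Egen k n}, x ∈ S → y ∈ S → x + y ∈ S := by
      rintro x y ⟨h1, h2, h3, h4, h5⟩ ⟨g1, g2, g3, g4, g5⟩
      refine ⟨by rw [map_add, h1, g1, add_zero], fun d => by rw [map_add, map_add, h2, g2, add_zero],
        fun d => by rw [map_add, map_add, map_add, h3, g3, add_zero],
        by rw [Cf_add, Cf_add]; linear_combination h4 + g4,
        by rw [map_add, Cf_add, Cf_add]; linear_combination h5 + g5⟩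
    have hneg : ∀ {x : Egen k n}, x ∈ S → -x ∈ S := by
      rintro x ⟨h1, h2, h3, h4, h5⟩
      refine ⟨by rw [map_neg, h1, neg_zero], fun d => by rw [map_neg, map_neg, h2 d, neg_zero],
        fun d => by rw [map_neg, map_neg, map_neg, h3 d, neg_zero],
        by rw [Cf_neg, Cf_neg]; linear_combination -h4,
        by rw [map_neg, Cf_neg, Cf_neg]; linear_combination -h5⟩
    have hmulr : ∀ {x y : Egen k n}, x ∈ S → x * y ∈ S := by
      rintro x y ⟨h1, h2, h3, h4, h5⟩
      refine ⟨by rw [map_mul, h1, zero_mul], fun d => by rw [eps_cL_mul, h1, h2, zero_mul,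
        zero_mul, add_zero], fun d => ?_, ?_, ?_⟩
      · rw [map_mul, eps_cL_mul]
        simp [eps_involute, h1, h3]
      · simp only [Cf_mul, h2, h3, h1, zero_mul, mul_zero, add_zero, zero_add]
        linear_combination eps y * h4
      · rw [map_mul]
        simp only [Cf_mul, eps_involute, h2, h3, h1, CliffordAlgebra.involute_involute,
          zero_mul, mul_zero, add_zero, zero_add]
        linear_combination eps y * h5
    have hmull : ∀ {x y : Egen k n}, y ∈ S → x * y ∈ S := by
      rintro x y ⟨h1, h2, h3, h4, h5⟩
      refine ⟨by rw [map_mul, h1, mul_zero], fun d => by rw [eps_cL_mul, h1, h2, mul_zero,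
        mul_zero, add_zero], fun d => ?_, ?_, ?_⟩
      · rw [map_mul, eps_cL_mul]
        simp [eps_involute, h1, h3]
      · simp only [Cf_mul, h2, h3, h1, zero_mul, mul_zero, add_zero, zero_add]
        linear_combination eps x * h4
      · rw [map_mul]
        simp only [Cf_mul, eps_involute, h2, h3, h1, CliffordAlgebra.involute_involute,
          zero_mul, mul_zero, add_zero, zero_add]
        linear_combination eps x * h5
    let K : TwoSidedIdeal (Egen k n) := TwoSidedIdeal.mk' S hzero hadd hneg hmull hmulr
    have hsub : resGens k n ⊆ (K : Set (Egen k n)) := by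
      intro g hgen
      obtain ⟨s, t, rfl⟩ := gens_eq g hgen
      rw [SetLike.mem_coe, TwoSidedIdeal.mem_mk']
      refine ⟨eps_ιι s t, fun d => eps_cL_ιι d s t, fun d => by rw [invol_ιι]; exact eps_cL_ιι d s t,
        hg _ hgen, by rw [invol_ιι]; exact hg _ hgen⟩
    have := TwoSidedIdeal.mem_span_iff.mp hx K hsub
    rwa [TwoSidedIdeal.mem_mk'] at this
  exact fun x hx => (key x hx).2.2.2.1

end Case2Aux
namespace Case2Aux

variable {k : Type} [Field k] {n : ℕ}

lemma sgl_apply' (p q : Fin n) (h : p ≠ q) (γ : RIdx n) :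
    sgl (k := k) p q h γ = if (p : ℕ) = (γ.1.1 : ℕ) ∧ (q : ℕ) = (γ.1.2 : ℕ) then 1 else 0 := by
  simp only [sgl, Finsupp.single_apply, Subtype.ext_iff, Prod.ext_iff, Fin.ext_iff]

lemma Cf_tau (A B : RIdx n) (i j m : Fin n) (hij : i < j) (hmi : m ≠ i) (hmj : m ≠ j) :
    Cf A B ((egen k m i hmi - egen k j i hij.ne') * (egen k m j hmj - egen k i j hij.ne)) =
      ((sgl m i hmi - sgl j i hij.ne' : RIdx n →₀ k) A) *
        ((sgl m j hmj - sgl i j hij.ne : RIdx n →₀ k) B)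
      - ((sgl m j hmj - sgl i j hij.ne : RIdx n →₀ k) A) *
        ((sgl m i hmi - sgl j i hij.ne' : RIdx n →₀ k) B) := by
  rw [egen_eq, egen_eq, egen_eq, egen_eq, ← map_sub, ← map_sub, Cf_ιι]

lemma ann45 (i1 i2 i3 : Fin n) (e1 : (i1 : ℕ) = 0) (e2 : (i2 : ℕ) = 1) (e3 : (i3 : ℕ) = 2)
    (n31 : i3 ≠ i1) (n32 : i3 ≠ i2) (n12 : i1 ≠ i2) :
    ∀ g ∈ resGens k n, Cf ⟨(i3, i1), n31⟩ ⟨(i3, i2), n32⟩ g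
      + (-1 : k) * Cf ⟨(i1, i2), n12⟩ ⟨(i3, i1), n31⟩ g = 0 := by
  rintro g (⟨i, j, hij, rfl⟩ | ⟨i, j, m, hij, hmi, hmj, rfl⟩) <;> have hij' : (i : ℕ) < (j : ℕ) := hij
  · rw [egen_eq, egen_eq, Cf_ιι, Cf_ιι]
    simp only [sgl_apply', e1, e2, e3]
    rcases (by omega : (i : ℕ) = 0 ∨ (i : ℕ) = 1 ∨ (i : ℕ) = 2 ∨
      ((i : ℕ) ≠ 0 ∧ (i : ℕ) ≠ 1 ∧ (i : ℕ) ≠ 2)) with hi | hi | hi | ⟨hi0, hi1, hi2⟩ <;>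
    rcases (by omega : (j : ℕ) = 0 ∨ (j : ℕ) = 1 ∨ (j : ℕ) = 2 ∨
      ((j : ℕ) ≠ 0 ∧ (j : ℕ) ≠ 1 ∧ (j : ℕ) ≠ 2)) with hj | hj | hj | ⟨hj0, hj1, hj2⟩ <;>
    simp_all <;> ring_nf
  · have hmi' : (m : ℕ) ≠ (i : ℕ) := fun h => hmi (Fin.val_injective h)
    have hmj' : (m : ℕ) ≠ (j : ℕ) := fun h => hmj (Fin.val_injective h)
    rw [Cf_tau _ _ i j m hij hmi hmj, Cf_tau _ _ i j m hij hmi hmj]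
    simp only [Finsupp.sub_apply, sgl_apply', e1, e2, e3]
    rcases (by omega : (i : ℕ) = 0 ∨ (i : ℕ) = 1 ∨ (i : ℕ) = 2 ∨
      ((i : ℕ) ≠ 0 ∧ (i : ℕ) ≠ 1 ∧ (i : ℕ) ≠ 2)) with hi | hi | hi | ⟨hi0, hi1, hi2⟩ <;>
    rcases (by omega : (j : ℕ) = 0 ∨ (j : ℕ) = 1 ∨ (j : ℕ) = 2 ∨
      ((j : ℕ) ≠ 0 ∧ (j : ℕ) ≠ 1 ∧ (j : ℕ) ≠ 2)) with hj | hj | hj | ⟨hj0, hj1, hj2⟩ <;>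
    rcases (by omega : (m : ℕ) = 0 ∨ (m : ℕ) = 1 ∨ (m : ℕ) = 2 ∨
      ((m : ℕ) ≠ 0 ∧ (m : ℕ) ≠ 1 ∧ (m : ℕ) ≠ 2)) with hm | hm | hm | ⟨hm0, hm1, hm2⟩ <;>
    simp_all <;> ring_nf
end Case2Aux
namespace Case2Aux

variable {k : Type} [Field k] {n : ℕ}

set_option maxHeartbeats 1000000 in
lemma annA13 (i1 i2 i3 : Fin n) (e1 : (i1 : ℕ) = 0) (e2 : (i2 : ℕ) = 1) (e3 : (i3 : ℕ) = 2)
    (n21 : i2 ≠ i1) (n31 : i3 ≠ i1) (n12 : i1 ≠ i2) (n32 : i3 ≠ i2) (n13 : i1 ≠ i3) (n23 : i2 ≠ i3)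
     :
    ∀ g ∈ resGens k n, Cf ⟨(i1, i2), n12⟩ ⟨(i3, i2), n32⟩ g
      + (0 : k) * Cf ⟨(i1, i2), n12⟩ ⟨(i3, i2), n32⟩ g = 0 := by
  rintro g (⟨i, j, hij, rfl⟩ | ⟨i, j, m, hij, hmi, hmj, rfl⟩) <;>
    have hij' : (i : ℕ) < (j : ℕ) := hij
  · simp only [egen_eq, Cf_ιι]
    simp only [sgl_apply', e1, e2, e3]
    rcases (by omega : (i : ℕ) = 0 ∨ (i : ℕ) = 1 ∨ (i : ℕ) = 2 ∨ ((i : ℕ) ≠ 0 ∧ (i : ℕ) ≠ 1 ∧ (i : ℕ) ≠ 2)) with hi|hi|hi|⟨hi0, hi1, hi2⟩ <;>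
    rcases (by omega : (j : ℕ) = 0 ∨ (j : ℕ) = 1 ∨ (j : ℕ) = 2 ∨ ((j : ℕ) ≠ 0 ∧ (j : ℕ) ≠ 1 ∧ (j : ℕ) ≠ 2)) with hj|hj|hj|⟨hj0, hj1, hj2⟩ <;>
    simp_all
  · have hmi' : (m : ℕ) ≠ (i : ℕ) := fun h => hmi (Fin.val_injective h)
    have hmj' : (m : ℕ) ≠ (j : ℕ) := fun h => hmj (Fin.val_injective h)
    rw [Cf_tau _ _ i j m hij hmi hmj]
    try rw [Cf_tau _ _ i j m hij hmi hmj]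
    simp only [Finsupp.sub_apply, sgl_apply', e1, e2, e3]
    rcases (by omega : (i : ℕ) = 0 ∨ (i : ℕ) = 1 ∨ (i : ℕ) = 2 ∨ ((i : ℕ) ≠ 0 ∧ (i : ℕ) ≠ 1 ∧ (i : ℕ) ≠ 2)) with hi|hi|hi|⟨hi0, hi1, hi2⟩ <;>
    rcases (by omega : (j : ℕ) = 0 ∨ (j : ℕ) = 1 ∨ (j : ℕ) = 2 ∨ ((j : ℕ) ≠ 0 ∧ (j : ℕ) ≠ 1 ∧ (j : ℕ) ≠ 2)) with hj|hj|hj|⟨hj0, hj1, hj2⟩ <;>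
    rcases (by omega : (m : ℕ) = 0 ∨ (m : ℕ) = 1 ∨ (m : ℕ) = 2 ∨ ((m : ℕ) ≠ 0 ∧ (m : ℕ) ≠ 1 ∧ (m : ℕ) ≠ 2)) with hm|hm|hm|⟨hm0, hm1, hm2⟩ <;>
    simp_all

set_option maxHeartbeats 1000000 in
lemma annA14 (i1 i2 i3 : Fin n) (e1 : (i1 : ℕ) = 0) (e2 : (i2 : ℕ) = 1) (e3 : (i3 : ℕ) = 2)
    (n21 : i2 ≠ i1) (n31 : i3 ≠ i1) (n12 : i1 ≠ i2) (n32 : i3 ≠ i2) (n13 : i1 ≠ i3) (n23 : i2 ≠ i3)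
     :
    ∀ g ∈ resGens k n, Cf ⟨(i2, i1), n21⟩ ⟨(i3, i1), n31⟩ g
      + (0 : k) * Cf ⟨(i2, i1), n21⟩ ⟨(i3, i1), n31⟩ g = 0 := by
  rintro g (⟨i, j, hij, rfl⟩ | ⟨i, j, m, hij, hmi, hmj, rfl⟩) <;>
    have hij' : (i : ℕ) < (j : ℕ) := hij
  · simp only [egen_eq, Cf_ιι]
    simp only [sgl_apply', e1, e2, e3]
    rcases (by omega : (i : ℕ) = 0 ∨ (i : ℕ) = 1 ∨ (i : ℕ) = 2 ∨ ((i : ℕ) ≠ 0 ∧ (i : ℕ) ≠ 1 ∧ (i : ℕ) ≠ 2)) with hi|hi|hi|⟨hi0, hi1, hi2⟩ <;>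
    rcases (by omega : (j : ℕ) = 0 ∨ (j : ℕ) = 1 ∨ (j : ℕ) = 2 ∨ ((j : ℕ) ≠ 0 ∧ (j : ℕ) ≠ 1 ∧ (j : ℕ) ≠ 2)) with hj|hj|hj|⟨hj0, hj1, hj2⟩ <;>
    simp_all
  · have hmi' : (m : ℕ) ≠ (i : ℕ) := fun h => hmi (Fin.val_injective h)
    have hmj' : (m : ℕ) ≠ (j : ℕ) := fun h => hmj (Fin.val_injective h)
    rw [Cf_tau _ _ i j m hij hmi hmj]
    try rw [Cf_tau _ _ i j m hij hmi hmj]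
    simp only [Finsupp.sub_apply, sgl_apply', e1, e2, e3]
    rcases (by omega : (i : ℕ) = 0 ∨ (i : ℕ) = 1 ∨ (i : ℕ) = 2 ∨ ((i : ℕ) ≠ 0 ∧ (i : ℕ) ≠ 1 ∧ (i : ℕ) ≠ 2)) with hi|hi|hi|⟨hi0, hi1, hi2⟩ <;>
    rcases (by omega : (j : ℕ) = 0 ∨ (j : ℕ) = 1 ∨ (j : ℕ) = 2 ∨ ((j : ℕ) ≠ 0 ∧ (j : ℕ) ≠ 1 ∧ (j : ℕ) ≠ 2)) with hj|hj|hj|⟨hj0, hj1, hj2⟩ <;>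
    rcases (by omega : (m : ℕ) = 0 ∨ (m : ℕ) = 1 ∨ (m : ℕ) = 2 ∨ ((m : ℕ) ≠ 0 ∧ (m : ℕ) ≠ 1 ∧ (m : ℕ) ≠ 2)) with hm|hm|hm|⟨hm0, hm1, hm2⟩ <;>
    simp_all

set_option maxHeartbeats 1000000 in
lemma annA15 (i1 i2 i3 : Fin n) (e1 : (i1 : ℕ) = 0) (e2 : (i2 : ℕ) = 1) (e3 : (i3 : ℕ) = 2)
    (n21 : i2 ≠ i1) (n31 : i3 ≠ i1) (n12 : i1 ≠ i2) (n32 : i3 ≠ i2) (n13 : i1 ≠ i3) (n23 : i2 ≠ i3)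
     :
    ∀ g ∈ resGens k n, Cf ⟨(i1, i3), n13⟩ ⟨(i2, i3), n23⟩ g
      + (0 : k) * Cf ⟨(i1, i3), n13⟩ ⟨(i2, i3), n23⟩ g = 0 := by
  rintro g (⟨i, j, hij, rfl⟩ | ⟨i, j, m, hij, hmi, hmj, rfl⟩) <;>
    have hij' : (i : ℕ) < (j : ℕ) := hij
  · simp only [egen_eq, Cf_ιι]
    simp only [sgl_apply', e1, e2, e3]
    rcases (by omega : (i : ℕ) = 0 ∨ (i : ℕ) = 1 ∨ (i : ℕ) = 2 ∨ ((i : ℕ) ≠ 0 ∧ (i : ℕ) ≠ 1 ∧ (i : ℕ) ≠ 2)) with hi|hi|hi|⟨hi0, hi1, hi2⟩ <;>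
    rcases (by omega : (j : ℕ) = 0 ∨ (j : ℕ) = 1 ∨ (j : ℕ) = 2 ∨ ((j : ℕ) ≠ 0 ∧ (j : ℕ) ≠ 1 ∧ (j : ℕ) ≠ 2)) with hj|hj|hj|⟨hj0, hj1, hj2⟩ <;>
    simp_all
  · have hmi' : (m : ℕ) ≠ (i : ℕ) := fun h => hmi (Fin.val_injective h)
    have hmj' : (m : ℕ) ≠ (j : ℕ) := fun h => hmj (Fin.val_injective h)
    rw [Cf_tau _ _ i j m hij hmi hmj]
    try rw [Cf_tau _ _ i j m hij hmi hmj]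
    simp only [Finsupp.sub_apply, sgl_apply', e1, e2, e3]
    rcases (by omega : (i : ℕ) = 0 ∨ (i : ℕ) = 1 ∨ (i : ℕ) = 2 ∨ ((i : ℕ) ≠ 0 ∧ (i : ℕ) ≠ 1 ∧ (i : ℕ) ≠ 2)) with hi|hi|hi|⟨hi0, hi1, hi2⟩ <;>
    rcases (by omega : (j : ℕ) = 0 ∨ (j : ℕ) = 1 ∨ (j : ℕ) = 2 ∨ ((j : ℕ) ≠ 0 ∧ (j : ℕ) ≠ 1 ∧ (j : ℕ) ≠ 2)) with hj|hj|hj|⟨hj0, hj1, hj2⟩ <;>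
    rcases (by omega : (m : ℕ) = 0 ∨ (m : ℕ) = 1 ∨ (m : ℕ) = 2 ∨ ((m : ℕ) ≠ 0 ∧ (m : ℕ) ≠ 1 ∧ (m : ℕ) ≠ 2)) with hm|hm|hm|⟨hm0, hm1, hm2⟩ <;>
    simp_all

set_option maxHeartbeats 1000000 in
lemma annA46 (i1 i2 i3 : Fin n) (e1 : (i1 : ℕ) = 0) (e2 : (i2 : ℕ) = 1) (e3 : (i3 : ℕ) = 2)
    (n21 : i2 ≠ i1) (n31 : i3 ≠ i1) (n12 : i1 ≠ i2) (n32 : i3 ≠ i2) (n13 : i1 ≠ i3) (n23 : i2 ≠ i3)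
     :
    ∀ g ∈ resGens k n, Cf ⟨(i3, i1), n31⟩ ⟨(i3, i2), n32⟩ g
      + (1 : k) * Cf ⟨(i2, i1), n21⟩ ⟨(i3, i2), n32⟩ g = 0 := by
  rintro g (⟨i, j, hij, rfl⟩ | ⟨i, j, m, hij, hmi, hmj, rfl⟩) <;>
    have hij' : (i : ℕ) < (j : ℕ) := hij
  · simp only [egen_eq, Cf_ιι]
    simp only [sgl_apply', e1, e2, e3]
    rcases (by omega : (i : ℕ) = 0 ∨ (i : ℕ) = 1 ∨ (i : ℕ) = 2 ∨ ((i : ℕ) ≠ 0 ∧ (i : ℕ) ≠ 1 ∧ (i : ℕ) ≠ 2)) with hi|hi|hi|⟨hi0, hi1, hi2⟩ <;>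
    rcases (by omega : (j : ℕ) = 0 ∨ (j : ℕ) = 1 ∨ (j : ℕ) = 2 ∨ ((j : ℕ) ≠ 0 ∧ (j : ℕ) ≠ 1 ∧ (j : ℕ) ≠ 2)) with hj|hj|hj|⟨hj0, hj1, hj2⟩ <;>
    simp_all
  · have hmi' : (m : ℕ) ≠ (i : ℕ) := fun h => hmi (Fin.val_injective h)
    have hmj' : (m : ℕ) ≠ (j : ℕ) := fun h => hmj (Fin.val_injective h)
    rw [Cf_tau _ _ i j m hij hmi hmj]
    try rw [Cf_tau _ _ i j m hij hmi hmj]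
    simp only [Finsupp.sub_apply, sgl_apply', e1, e2, e3]
    rcases (by omega : (i : ℕ) = 0 ∨ (i : ℕ) = 1 ∨ (i : ℕ) = 2 ∨ ((i : ℕ) ≠ 0 ∧ (i : ℕ) ≠ 1 ∧ (i : ℕ) ≠ 2)) with hi|hi|hi|⟨hi0, hi1, hi2⟩ <;>
    rcases (by omega : (j : ℕ) = 0 ∨ (j : ℕ) = 1 ∨ (j : ℕ) = 2 ∨ ((j : ℕ) ≠ 0 ∧ (j : ℕ) ≠ 1 ∧ (j : ℕ) ≠ 2)) with hj|hj|hj|⟨hj0, hj1, hj2⟩ <;>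
    rcases (by omega : (m : ℕ) = 0 ∨ (m : ℕ) = 1 ∨ (m : ℕ) = 2 ∨ ((m : ℕ) ≠ 0 ∧ (m : ℕ) ≠ 1 ∧ (m : ℕ) ≠ 2)) with hm|hm|hm|⟨hm0, hm1, hm2⟩ <;>
    simp_all

set_option maxHeartbeats 1000000 in
lemma annA78 (i1 i2 i3 : Fin n) (e1 : (i1 : ℕ) = 0) (e2 : (i2 : ℕ) = 1) (e3 : (i3 : ℕ) = 2)
    (n21 : i2 ≠ i1) (n31 : i3 ≠ i1) (n12 : i1 ≠ i2) (n32 : i3 ≠ i2) (n13 : i1 ≠ i3) (n23 : i2 ≠ i3)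
     :
    ∀ g ∈ resGens k n, Cf ⟨(i2, i1), n21⟩ ⟨(i2, i3), n23⟩ g
      + (1 : k) * Cf ⟨(i2, i1), n21⟩ ⟨(i1, i3), n13⟩ g = 0 := by
  rintro g (⟨i, j, hij, rfl⟩ | ⟨i, j, m, hij, hmi, hmj, rfl⟩) <;>
    have hij' : (i : ℕ) < (j : ℕ) := hij
  · simp only [egen_eq, Cf_ιι]
    simp only [sgl_apply', e1, e2, e3]
    rcases (by omega : (i : ℕ) = 0 ∨ (i : ℕ) = 1 ∨ (i : ℕ) = 2 ∨ ((i : ℕ) ≠ 0 ∧ (i : ℕ) ≠ 1 ∧ (i : ℕ) ≠ 2)) with hi|hi|hi|⟨hi0, hi1, hi2⟩ <;>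
    rcases (by omega : (j : ℕ) = 0 ∨ (j : ℕ) = 1 ∨ (j : ℕ) = 2 ∨ ((j : ℕ) ≠ 0 ∧ (j : ℕ) ≠ 1 ∧ (j : ℕ) ≠ 2)) with hj|hj|hj|⟨hj0, hj1, hj2⟩ <;>
    simp_all
  · have hmi' : (m : ℕ) ≠ (i : ℕ) := fun h => hmi (Fin.val_injective h)
    have hmj' : (m : ℕ) ≠ (j : ℕ) := fun h => hmj (Fin.val_injective h)
    rw [Cf_tau _ _ i j m hij hmi hmj]
    try rw [Cf_tau _ _ i j m hij hmi hmj]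
    simp only [Finsupp.sub_apply, sgl_apply', e1, e2, e3]
    rcases (by omega : (i : ℕ) = 0 ∨ (i : ℕ) = 1 ∨ (i : ℕ) = 2 ∨ ((i : ℕ) ≠ 0 ∧ (i : ℕ) ≠ 1 ∧ (i : ℕ) ≠ 2)) with hi|hi|hi|⟨hi0, hi1, hi2⟩ <;>
    rcases (by omega : (j : ℕ) = 0 ∨ (j : ℕ) = 1 ∨ (j : ℕ) = 2 ∨ ((j : ℕ) ≠ 0 ∧ (j : ℕ) ≠ 1 ∧ (j : ℕ) ≠ 2)) with hj|hj|hj|⟨hj0, hj1, hj2⟩ <;>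
    rcases (by omega : (m : ℕ) = 0 ∨ (m : ℕ) = 1 ∨ (m : ℕ) = 2 ∨ ((m : ℕ) ≠ 0 ∧ (m : ℕ) ≠ 1 ∧ (m : ℕ) ≠ 2)) with hm|hm|hm|⟨hm0, hm1, hm2⟩ <;>
    simp_all

set_option maxHeartbeats 1000000 in
lemma annA79 (i1 i2 i3 : Fin n) (e1 : (i1 : ℕ) = 0) (e2 : (i2 : ℕ) = 1) (e3 : (i3 : ℕ) = 2)
    (n21 : i2 ≠ i1) (n31 : i3 ≠ i1) (n12 : i1 ≠ i2) (n32 : i3 ≠ i2) (n13 : i1 ≠ i3) (n23 : i2 ≠ i3)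
     :
    ∀ g ∈ resGens k n, Cf ⟨(i2, i1), n21⟩ ⟨(i2, i3), n23⟩ g
      + (1 : k) * Cf ⟨(i3, i1), n31⟩ ⟨(i2, i3), n23⟩ g = 0 := by
  rintro g (⟨i, j, hij, rfl⟩ | ⟨i, j, m, hij, hmi, hmj, rfl⟩) <;>
    have hij' : (i : ℕ) < (j : ℕ) := hij
  · simp only [egen_eq, Cf_ιι]
    simp only [sgl_apply', e1, e2, e3]
    rcases (by omega : (i : ℕ) = 0 ∨ (i : ℕ) = 1 ∨ (i : ℕ) = 2 ∨ ((i : ℕ) ≠ 0 ∧ (i : ℕ) ≠ 1 ∧ (i : ℕ) ≠ 2)) with hi|hi|hi|⟨hi0, hi1, hi2⟩ <;>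
    rcases (by omega : (j : ℕ) = 0 ∨ (j : ℕ) = 1 ∨ (j : ℕ) = 2 ∨ ((j : ℕ) ≠ 0 ∧ (j : ℕ) ≠ 1 ∧ (j : ℕ) ≠ 2)) with hj|hj|hj|⟨hj0, hj1, hj2⟩ <;>
    simp_all
  · have hmi' : (m : ℕ) ≠ (i : ℕ) := fun h => hmi (Fin.val_injective h)
    have hmj' : (m : ℕ) ≠ (j : ℕ) := fun h => hmj (Fin.val_injective h)
    rw [Cf_tau _ _ i j m hij hmi hmj]
    try rw [Cf_tau _ _ i j m hij hmi hmj]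
    simp only [Finsupp.sub_apply, sgl_apply', e1, e2, e3]
    rcases (by omega : (i : ℕ) = 0 ∨ (i : ℕ) = 1 ∨ (i : ℕ) = 2 ∨ ((i : ℕ) ≠ 0 ∧ (i : ℕ) ≠ 1 ∧ (i : ℕ) ≠ 2)) with hi|hi|hi|⟨hi0, hi1, hi2⟩ <;>
    rcases (by omega : (j : ℕ) = 0 ∨ (j : ℕ) = 1 ∨ (j : ℕ) = 2 ∨ ((j : ℕ) ≠ 0 ∧ (j : ℕ) ≠ 1 ∧ (j : ℕ) ≠ 2)) with hj|hj|hj|⟨hj0, hj1, hj2⟩ <;>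
    rcases (by omega : (m : ℕ) = 0 ∨ (m : ℕ) = 1 ∨ (m : ℕ) = 2 ∨ ((m : ℕ) ≠ 0 ∧ (m : ℕ) ≠ 1 ∧ (m : ℕ) ≠ 2)) with hm|hm|hm|⟨hm0, hm1, hm2⟩ <;>
    simp_all

set_option maxHeartbeats 1000000 in
lemma annA1011 (i1 i2 i3 : Fin n) (e1 : (i1 : ℕ) = 0) (e2 : (i2 : ℕ) = 1) (e3 : (i3 : ℕ) = 2)
    (n21 : i2 ≠ i1) (n31 : i3 ≠ i1) (n12 : i1 ≠ i2) (n32 : i3 ≠ i2) (n13 : i1 ≠ i3) (n23 : i2 ≠ i3)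
     :
    ∀ g ∈ resGens k n, Cf ⟨(i1, i3), n13⟩ ⟨(i3, i2), n32⟩ g
      + (-1 : k) * Cf ⟨(i1, i2), n12⟩ ⟨(i1, i3), n13⟩ g = 0 := by
  rintro g (⟨i, j, hij, rfl⟩ | ⟨i, j, m, hij, hmi, hmj, rfl⟩) <;>
    have hij' : (i : ℕ) < (j : ℕ) := hij
  · simp only [egen_eq, Cf_ιι]
    simp only [sgl_apply', e1, e2, e3]
    rcases (by omega : (i : ℕ) = 0 ∨ (i : ℕ) = 1 ∨ (i : ℕ) = 2 ∨ ((i : ℕ) ≠ 0 ∧ (i : ℕ) ≠ 1 ∧ (i : ℕ) ≠ 2)) with hi|hi|hi|⟨hi0, hi1, hi2⟩ <;>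
    rcases (by omega : (j : ℕ) = 0 ∨ (j : ℕ) = 1 ∨ (j : ℕ) = 2 ∨ ((j : ℕ) ≠ 0 ∧ (j : ℕ) ≠ 1 ∧ (j : ℕ) ≠ 2)) with hj|hj|hj|⟨hj0, hj1, hj2⟩ <;>
    simp_all
  · have hmi' : (m : ℕ) ≠ (i : ℕ) := fun h => hmi (Fin.val_injective h)
    have hmj' : (m : ℕ) ≠ (j : ℕ) := fun h => hmj (Fin.val_injective h)
    rw [Cf_tau _ _ i j m hij hmi hmj]
    try rw [Cf_tau _ _ i j m hij hmi hmj]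
    simp only [Finsupp.sub_apply, sgl_apply', e1, e2, e3]
    rcases (by omega : (i : ℕ) = 0 ∨ (i : ℕ) = 1 ∨ (i : ℕ) = 2 ∨ ((i : ℕ) ≠ 0 ∧ (i : ℕ) ≠ 1 ∧ (i : ℕ) ≠ 2)) with hi|hi|hi|⟨hi0, hi1, hi2⟩ <;>
    rcases (by omega : (j : ℕ) = 0 ∨ (j : ℕ) = 1 ∨ (j : ℕ) = 2 ∨ ((j : ℕ) ≠ 0 ∧ (j : ℕ) ≠ 1 ∧ (j : ℕ) ≠ 2)) with hj|hj|hj|⟨hj0, hj1, hj2⟩ <;>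
    rcases (by omega : (m : ℕ) = 0 ∨ (m : ℕ) = 1 ∨ (m : ℕ) = 2 ∨ ((m : ℕ) ≠ 0 ∧ (m : ℕ) ≠ 1 ∧ (m : ℕ) ≠ 2)) with hm|hm|hm|⟨hm0, hm1, hm2⟩ <;>
    simp_all

set_option maxHeartbeats 1000000 in
lemma annA1012 (i1 i2 i3 : Fin n) (e1 : (i1 : ℕ) = 0) (e2 : (i2 : ℕ) = 1) (e3 : (i3 : ℕ) = 2)
    (n21 : i2 ≠ i1) (n31 : i3 ≠ i1) (n12 : i1 ≠ i2) (n32 : i3 ≠ i2) (n13 : i1 ≠ i3) (n23 : i2 ≠ i3)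
     :
    ∀ g ∈ resGens k n, Cf ⟨(i1, i3), n13⟩ ⟨(i3, i2), n32⟩ g
      + (1 : k) * Cf ⟨(i1, i2), n12⟩ ⟨(i2, i3), n23⟩ g = 0 := by
  rintro g (⟨i, j, hij, rfl⟩ | ⟨i, j, m, hij, hmi, hmj, rfl⟩) <;>
    have hij' : (i : ℕ) < (j : ℕ) := hij
  · simp only [egen_eq, Cf_ιι]
    simp only [sgl_apply', e1, e2, e3]
    rcases (by omega : (i : ℕ) = 0 ∨ (i : ℕ) = 1 ∨ (i : ℕ) = 2 ∨ ((i : ℕ) ≠ 0 ∧ (i : ℕ) ≠ 1 ∧ (i : ℕ) ≠ 2)) with hi|hi|hi|⟨hi0, hi1, hi2⟩ <;>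
    rcases (by omega : (j : ℕ) = 0 ∨ (j : ℕ) = 1 ∨ (j : ℕ) = 2 ∨ ((j : ℕ) ≠ 0 ∧ (j : ℕ) ≠ 1 ∧ (j : ℕ) ≠ 2)) with hj|hj|hj|⟨hj0, hj1, hj2⟩ <;>
    simp_all
  · have hmi' : (m : ℕ) ≠ (i : ℕ) := fun h => hmi (Fin.val_injective h)
    have hmj' : (m : ℕ) ≠ (j : ℕ) := fun h => hmj (Fin.val_injective h)
    rw [Cf_tau _ _ i j m hij hmi hmj]
    try rw [Cf_tau _ _ i j m hij hmi hmj]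
    simp only [Finsupp.sub_apply, sgl_apply', e1, e2, e3]
    rcases (by omega : (i : ℕ) = 0 ∨ (i : ℕ) = 1 ∨ (i : ℕ) = 2 ∨ ((i : ℕ) ≠ 0 ∧ (i : ℕ) ≠ 1 ∧ (i : ℕ) ≠ 2)) with hi|hi|hi|⟨hi0, hi1, hi2⟩ <;>
    rcases (by omega : (j : ℕ) = 0 ∨ (j : ℕ) = 1 ∨ (j : ℕ) = 2 ∨ ((j : ℕ) ≠ 0 ∧ (j : ℕ) ≠ 1 ∧ (j : ℕ) ≠ 2)) with hj|hj|hj|⟨hj0, hj1, hj2⟩ <;>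
    rcases (by omega : (m : ℕ) = 0 ∨ (m : ℕ) = 1 ∨ (m : ℕ) = 2 ∨ ((m : ℕ) ≠ 0 ∧ (m : ℕ) ≠ 1 ∧ (m : ℕ) ≠ 2)) with hm|hm|hm|⟨hm0, hm1, hm2⟩ <;>
    simp_all

set_option maxHeartbeats 1000000 in
lemma annB2q (i1 i2 i3 : Fin n) (e1 : (i1 : ℕ) = 0) (e2 : (i2 : ℕ) = 1) (e3 : (i3 : ℕ) = 2)
    (n21 : i2 ≠ i1) (n31 : i3 ≠ i1) (n12 : i1 ≠ i2) (n32 : i3 ≠ i2) (n13 : i1 ≠ i3) (n23 : i2 ≠ i3)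
    (q : Fin n) (vq0 : (q : ℕ) ≠ 0) (vq1 : (q : ℕ) ≠ 1) (vq2 : (q : ℕ) ≠ 2) (nq1 : q ≠ i1) (nq2 : q ≠ i2) (nq3 : q ≠ i3) (n1q : i1 ≠ q) (n2q : i2 ≠ q) (n3q : i3 ≠ q) :
    ∀ g ∈ resGens k n, Cf ⟨(i2, i1), n21⟩ ⟨(i2, q), n2q⟩ g
      + (1 : k) * Cf ⟨(q, i1), nq1⟩ ⟨(i2, q), n2q⟩ g = 0 := by
  have wq0 : (0 : ℕ) ≠ (q : ℕ) := fun h => vq0 h.symm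
  have wq1 : (1 : ℕ) ≠ (q : ℕ) := fun h => vq1 h.symm
  have wq2 : (2 : ℕ) ≠ (q : ℕ) := fun h => vq2 h.symm
  rintro g (⟨i, j, hij, rfl⟩ | ⟨i, j, m, hij, hmi, hmj, rfl⟩) <;>
    have hij' : (i : ℕ) < (j : ℕ) := hij
  · simp only [egen_eq, Cf_ιι]
    simp only [sgl_apply', e1, e2, e3]
    rcases (by omega : (i : ℕ) = 0 ∨ (i : ℕ) = 1 ∨ (i : ℕ) = 2 ∨ (i : ℕ) = (q : ℕ) ∨ ((i : ℕ) ≠ 0 ∧ (i : ℕ) ≠ 1 ∧ (i : ℕ) ≠ 2 ∧ (i : ℕ) ≠ (q : ℕ))) with hi|hi|hi|hi|⟨hi0, hi1, hi2, hi3⟩ <;>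
    rcases (by omega : (j : ℕ) = 0 ∨ (j : ℕ) = 1 ∨ (j : ℕ) = 2 ∨ (j : ℕ) = (q : ℕ) ∨ ((j : ℕ) ≠ 0 ∧ (j : ℕ) ≠ 1 ∧ (j : ℕ) ≠ 2 ∧ (j : ℕ) ≠ (q : ℕ))) with hj|hj|hj|hj|⟨hj0, hj1, hj2, hj3⟩ <;>
    simp_all
  · have hmi' : (m : ℕ) ≠ (i : ℕ) := fun h => hmi (Fin.val_injective h)
    have hmj' : (m : ℕ) ≠ (j : ℕ) := fun h => hmj (Fin.val_injective h)
    rw [Cf_tau _ _ i j m hij hmi hmj]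
    try rw [Cf_tau _ _ i j m hij hmi hmj]
    simp only [Finsupp.sub_apply, sgl_apply', e1, e2, e3]
    rcases (by omega : (i : ℕ) = 0 ∨ (i : ℕ) = 1 ∨ (i : ℕ) = 2 ∨ (i : ℕ) = (q : ℕ) ∨ ((i : ℕ) ≠ 0 ∧ (i : ℕ) ≠ 1 ∧ (i : ℕ) ≠ 2 ∧ (i : ℕ) ≠ (q : ℕ))) with hi|hi|hi|hi|⟨hi0, hi1, hi2, hi3⟩ <;>
    rcases (by omega : (j : ℕ) = 0 ∨ (j : ℕ) = 1 ∨ (j : ℕ) = 2 ∨ (j : ℕ) = (q : ℕ) ∨ ((j : ℕ) ≠ 0 ∧ (j : ℕ) ≠ 1 ∧ (j : ℕ) ≠ 2 ∧ (j : ℕ) ≠ (q : ℕ))) with hj|hj|hj|hj|⟨hj0, hj1, hj2, hj3⟩ <;>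
    rcases (by omega : (m : ℕ) = 0 ∨ (m : ℕ) = 1 ∨ (m : ℕ) = 2 ∨ (m : ℕ) = (q : ℕ) ∨ ((m : ℕ) ≠ 0 ∧ (m : ℕ) ≠ 1 ∧ (m : ℕ) ≠ 2 ∧ (m : ℕ) ≠ (q : ℕ))) with hm|hm|hm|hm|⟨hm0, hm1, hm2, hm3⟩ <;>
    simp_all

set_option maxHeartbeats 1000000 in
lemma annB1q (i1 i2 i3 : Fin n) (e1 : (i1 : ℕ) = 0) (e2 : (i2 : ℕ) = 1) (e3 : (i3 : ℕ) = 2)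
    (n21 : i2 ≠ i1) (n31 : i3 ≠ i1) (n12 : i1 ≠ i2) (n32 : i3 ≠ i2) (n13 : i1 ≠ i3) (n23 : i2 ≠ i3)
    (q : Fin n) (vq0 : (q : ℕ) ≠ 0) (vq1 : (q : ℕ) ≠ 1) (vq2 : (q : ℕ) ≠ 2) (nq1 : q ≠ i1) (nq2 : q ≠ i2) (nq3 : q ≠ i3) (n1q : i1 ≠ q) (n2q : i2 ≠ q) (n3q : i3 ≠ q) :
    ∀ g ∈ resGens k n, Cf ⟨(i2, i1), n21⟩ ⟨(i1, q), n1q⟩ g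
      + (1 : k) * Cf ⟨(i2, i1), n21⟩ ⟨(i2, q), n2q⟩ g = 0 := by
  have wq0 : (0 : ℕ) ≠ (q : ℕ) := fun h => vq0 h.symm
  have wq1 : (1 : ℕ) ≠ (q : ℕ) := fun h => vq1 h.symm
  have wq2 : (2 : ℕ) ≠ (q : ℕ) := fun h => vq2 h.symm
  rintro g (⟨i, j, hij, rfl⟩ | ⟨i, j, m, hij, hmi, hmj, rfl⟩) <;>
    have hij' : (i : ℕ) < (j : ℕ) := hij
  · simp only [egen_eq, Cf_ιι]
    simp only [sgl_apply', e1, e2, e3]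
    rcases (by omega : (i : ℕ) = 0 ∨ (i : ℕ) = 1 ∨ (i : ℕ) = 2 ∨ (i : ℕ) = (q : ℕ) ∨ ((i : ℕ) ≠ 0 ∧ (i : ℕ) ≠ 1 ∧ (i : ℕ) ≠ 2 ∧ (i : ℕ) ≠ (q : ℕ))) with hi|hi|hi|hi|⟨hi0, hi1, hi2, hi3⟩ <;>
    rcases (by omega : (j : ℕ) = 0 ∨ (j : ℕ) = 1 ∨ (j : ℕ) = 2 ∨ (j : ℕ) = (q : ℕ) ∨ ((j : ℕ) ≠ 0 ∧ (j : ℕ) ≠ 1 ∧ (j : ℕ) ≠ 2 ∧ (j : ℕ) ≠ (q : ℕ))) with hj|hj|hj|hj|⟨hj0, hj1, hj2, hj3⟩ <;>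
    simp_all
  · have hmi' : (m : ℕ) ≠ (i : ℕ) := fun h => hmi (Fin.val_injective h)
    have hmj' : (m : ℕ) ≠ (j : ℕ) := fun h => hmj (Fin.val_injective h)
    rw [Cf_tau _ _ i j m hij hmi hmj]
    try rw [Cf_tau _ _ i j m hij hmi hmj]
    simp only [Finsupp.sub_apply, sgl_apply', e1, e2, e3]
    rcases (by omega : (i : ℕ) = 0 ∨ (i : ℕ) = 1 ∨ (i : ℕ) = 2 ∨ (i : ℕ) = (q : ℕ) ∨ ((i : ℕ) ≠ 0 ∧ (i : ℕ) ≠ 1 ∧ (i : ℕ) ≠ 2 ∧ (i : ℕ) ≠ (q : ℕ))) with hi|hi|hi|hi|⟨hi0, hi1, hi2, hi3⟩ <;>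
    rcases (by omega : (j : ℕ) = 0 ∨ (j : ℕ) = 1 ∨ (j : ℕ) = 2 ∨ (j : ℕ) = (q : ℕ) ∨ ((j : ℕ) ≠ 0 ∧ (j : ℕ) ≠ 1 ∧ (j : ℕ) ≠ 2 ∧ (j : ℕ) ≠ (q : ℕ))) with hj|hj|hj|hj|⟨hj0, hj1, hj2, hj3⟩ <;>
    rcases (by omega : (m : ℕ) = 0 ∨ (m : ℕ) = 1 ∨ (m : ℕ) = 2 ∨ (m : ℕ) = (q : ℕ) ∨ ((m : ℕ) ≠ 0 ∧ (m : ℕ) ≠ 1 ∧ (m : ℕ) ≠ 2 ∧ (m : ℕ) ≠ (q : ℕ))) with hm|hm|hm|hm|⟨hm0, hm1, hm2, hm3⟩ <;>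
    simp_all

set_option maxHeartbeats 1000000 in
lemma annB3q (i1 i2 i3 : Fin n) (e1 : (i1 : ℕ) = 0) (e2 : (i2 : ℕ) = 1) (e3 : (i3 : ℕ) = 2)
    (n21 : i2 ≠ i1) (n31 : i3 ≠ i1) (n12 : i1 ≠ i2) (n32 : i3 ≠ i2) (n13 : i1 ≠ i3) (n23 : i2 ≠ i3)
    (q : Fin n) (vq0 : (q : ℕ) ≠ 0) (vq1 : (q : ℕ) ≠ 1) (vq2 : (q : ℕ) ≠ 2) (nq1 : q ≠ i1) (nq2 : q ≠ i2) (nq3 : q ≠ i3) (n1q : i1 ≠ q) (n2q : i2 ≠ q) (n3q : i3 ≠ q) :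
    ∀ g ∈ resGens k n, Cf ⟨(i2, i1), n21⟩ ⟨(i3, q), n3q⟩ g
      + (0 : k) * Cf ⟨(i2, i1), n21⟩ ⟨(i3, q), n3q⟩ g = 0 := by
  have wq0 : (0 : ℕ) ≠ (q : ℕ) := fun h => vq0 h.symm
  have wq1 : (1 : ℕ) ≠ (q : ℕ) := fun h => vq1 h.symm
  have wq2 : (2 : ℕ) ≠ (q : ℕ) := fun h => vq2 h.symm
  rintro g (⟨i, j, hij, rfl⟩ | ⟨i, j, m, hij, hmi, hmj, rfl⟩) <;>
    have hij' : (i : ℕ) < (j : ℕ) := hij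
  · simp only [egen_eq, Cf_ιι]
    simp only [sgl_apply', e1, e2, e3]
    rcases (by omega : (i : ℕ) = 0 ∨ (i : ℕ) = 1 ∨ (i : ℕ) = 2 ∨ (i : ℕ) = (q : ℕ) ∨ ((i : ℕ) ≠ 0 ∧ (i : ℕ) ≠ 1 ∧ (i : ℕ) ≠ 2 ∧ (i : ℕ) ≠ (q : ℕ))) with hi|hi|hi|hi|⟨hi0, hi1, hi2, hi3⟩ <;>
    rcases (by omega : (j : ℕ) = 0 ∨ (j : ℕ) = 1 ∨ (j : ℕ) = 2 ∨ (j : ℕ) = (q : ℕ) ∨ ((j : ℕ) ≠ 0 ∧ (j : ℕ) ≠ 1 ∧ (j : ℕ) ≠ 2 ∧ (j : ℕ) ≠ (q : ℕ))) with hj|hj|hj|hj|⟨hj0, hj1, hj2, hj3⟩ <;>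
    simp_all
  · have hmi' : (m : ℕ) ≠ (i : ℕ) := fun h => hmi (Fin.val_injective h)
    have hmj' : (m : ℕ) ≠ (j : ℕ) := fun h => hmj (Fin.val_injective h)
    rw [Cf_tau _ _ i j m hij hmi hmj]
    try rw [Cf_tau _ _ i j m hij hmi hmj]
    simp only [Finsupp.sub_apply, sgl_apply', e1, e2, e3]
    rcases (by omega : (i : ℕ) = 0 ∨ (i : ℕ) = 1 ∨ (i : ℕ) = 2 ∨ (i : ℕ) = (q : ℕ) ∨ ((i : ℕ) ≠ 0 ∧ (i : ℕ) ≠ 1 ∧ (i : ℕ) ≠ 2 ∧ (i : ℕ) ≠ (q : ℕ))) with hi|hi|hi|hi|⟨hi0, hi1, hi2, hi3⟩ <;>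
    rcases (by omega : (j : ℕ) = 0 ∨ (j : ℕ) = 1 ∨ (j : ℕ) = 2 ∨ (j : ℕ) = (q : ℕ) ∨ ((j : ℕ) ≠ 0 ∧ (j : ℕ) ≠ 1 ∧ (j : ℕ) ≠ 2 ∧ (j : ℕ) ≠ (q : ℕ))) with hj|hj|hj|hj|⟨hj0, hj1, hj2, hj3⟩ <;>
    rcases (by omega : (m : ℕ) = 0 ∨ (m : ℕ) = 1 ∨ (m : ℕ) = 2 ∨ (m : ℕ) = (q : ℕ) ∨ ((m : ℕ) ≠ 0 ∧ (m : ℕ) ≠ 1 ∧ (m : ℕ) ≠ 2 ∧ (m : ℕ) ≠ (q : ℕ))) with hm|hm|hm|hm|⟨hm0, hm1, hm2, hm3⟩ <;>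
    simp_all

set_option maxHeartbeats 1000000 in
lemma annBq1 (i1 i2 i3 : Fin n) (e1 : (i1 : ℕ) = 0) (e2 : (i2 : ℕ) = 1) (e3 : (i3 : ℕ) = 2)
    (n21 : i2 ≠ i1) (n31 : i3 ≠ i1) (n12 : i1 ≠ i2) (n32 : i3 ≠ i2) (n13 : i1 ≠ i3) (n23 : i2 ≠ i3)
    (q : Fin n) (vq0 : (q : ℕ) ≠ 0) (vq1 : (q : ℕ) ≠ 1) (vq2 : (q : ℕ) ≠ 2) (nq1 : q ≠ i1) (nq2 : q ≠ i2) (nq3 : q ≠ i3) (n1q : i1 ≠ q) (n2q : i2 ≠ q) (n3q : i3 ≠ q) :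
    ∀ g ∈ resGens k n, Cf ⟨(i2, i1), n21⟩ ⟨(q, i1), nq1⟩ g
      + (0 : k) * Cf ⟨(i2, i1), n21⟩ ⟨(q, i1), nq1⟩ g = 0 := by
  have wq0 : (0 : ℕ) ≠ (q : ℕ) := fun h => vq0 h.symm
  have wq1 : (1 : ℕ) ≠ (q : ℕ) := fun h => vq1 h.symm
  have wq2 : (2 : ℕ) ≠ (q : ℕ) := fun h => vq2 h.symm
  rintro g (⟨i, j, hij, rfl⟩ | ⟨i, j, m, hij, hmi, hmj, rfl⟩) <;>
    have hij' : (i : ℕ) < (j : ℕ) := hij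
  · simp only [egen_eq, Cf_ιι]
    simp only [sgl_apply', e1, e2, e3]
    rcases (by omega : (i : ℕ) = 0 ∨ (i : ℕ) = 1 ∨ (i : ℕ) = 2 ∨ (i : ℕ) = (q : ℕ) ∨ ((i : ℕ) ≠ 0 ∧ (i : ℕ) ≠ 1 ∧ (i : ℕ) ≠ 2 ∧ (i : ℕ) ≠ (q : ℕ))) with hi|hi|hi|hi|⟨hi0, hi1, hi2, hi3⟩ <;>
    rcases (by omega : (j : ℕ) = 0 ∨ (j : ℕ) = 1 ∨ (j : ℕ) = 2 ∨ (j : ℕ) = (q : ℕ) ∨ ((j : ℕ) ≠ 0 ∧ (j : ℕ) ≠ 1 ∧ (j : ℕ) ≠ 2 ∧ (j : ℕ) ≠ (q : ℕ))) with hj|hj|hj|hj|⟨hj0, hj1, hj2, hj3⟩ <;>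
    simp_all
  · have hmi' : (m : ℕ) ≠ (i : ℕ) := fun h => hmi (Fin.val_injective h)
    have hmj' : (m : ℕ) ≠ (j : ℕ) := fun h => hmj (Fin.val_injective h)
    rw [Cf_tau _ _ i j m hij hmi hmj]
    try rw [Cf_tau _ _ i j m hij hmi hmj]
    simp only [Finsupp.sub_apply, sgl_apply', e1, e2, e3]
    rcases (by omega : (i : ℕ) = 0 ∨ (i : ℕ) = 1 ∨ (i : ℕ) = 2 ∨ (i : ℕ) = (q : ℕ) ∨ ((i : ℕ) ≠ 0 ∧ (i : ℕ) ≠ 1 ∧ (i : ℕ) ≠ 2 ∧ (i : ℕ) ≠ (q : ℕ))) with hi|hi|hi|hi|⟨hi0, hi1, hi2, hi3⟩ <;>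
    rcases (by omega : (j : ℕ) = 0 ∨ (j : ℕ) = 1 ∨ (j : ℕ) = 2 ∨ (j : ℕ) = (q : ℕ) ∨ ((j : ℕ) ≠ 0 ∧ (j : ℕ) ≠ 1 ∧ (j : ℕ) ≠ 2 ∧ (j : ℕ) ≠ (q : ℕ))) with hj|hj|hj|hj|⟨hj0, hj1, hj2, hj3⟩ <;>
    rcases (by omega : (m : ℕ) = 0 ∨ (m : ℕ) = 1 ∨ (m : ℕ) = 2 ∨ (m : ℕ) = (q : ℕ) ∨ ((m : ℕ) ≠ 0 ∧ (m : ℕ) ≠ 1 ∧ (m : ℕ) ≠ 2 ∧ (m : ℕ) ≠ (q : ℕ))) with hm|hm|hm|hm|⟨hm0, hm1, hm2, hm3⟩ <;>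
    simp_all

set_option maxHeartbeats 1000000 in
lemma annBq2 (i1 i2 i3 : Fin n) (e1 : (i1 : ℕ) = 0) (e2 : (i2 : ℕ) = 1) (e3 : (i3 : ℕ) = 2)
    (n21 : i2 ≠ i1) (n31 : i3 ≠ i1) (n12 : i1 ≠ i2) (n32 : i3 ≠ i2) (n13 : i1 ≠ i3) (n23 : i2 ≠ i3)
    (q : Fin n) (vq0 : (q : ℕ) ≠ 0) (vq1 : (q : ℕ) ≠ 1) (vq2 : (q : ℕ) ≠ 2) (nq1 : q ≠ i1) (nq2 : q ≠ i2) (nq3 : q ≠ i3) (n1q : i1 ≠ q) (n2q : i2 ≠ q) (n3q : i3 ≠ q) :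
    ∀ g ∈ resGens k n, Cf ⟨(i2, i1), n21⟩ ⟨(q, i2), nq2⟩ g
      + (1 : k) * Cf ⟨(q, i1), nq1⟩ ⟨(q, i2), nq2⟩ g = 0 := by
  have wq0 : (0 : ℕ) ≠ (q : ℕ) := fun h => vq0 h.symm
  have wq1 : (1 : ℕ) ≠ (q : ℕ) := fun h => vq1 h.symm
  have wq2 : (2 : ℕ) ≠ (q : ℕ) := fun h => vq2 h.symm
  rintro g (⟨i, j, hij, rfl⟩ | ⟨i, j, m, hij, hmi, hmj, rfl⟩) <;>
    have hij' : (i : ℕ) < (j : ℕ) := hij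
  · simp only [egen_eq, Cf_ιι]
    simp only [sgl_apply', e1, e2, e3]
    rcases (by omega : (i : ℕ) = 0 ∨ (i : ℕ) = 1 ∨ (i : ℕ) = 2 ∨ (i : ℕ) = (q : ℕ) ∨ ((i : ℕ) ≠ 0 ∧ (i : ℕ) ≠ 1 ∧ (i : ℕ) ≠ 2 ∧ (i : ℕ) ≠ (q : ℕ))) with hi|hi|hi|hi|⟨hi0, hi1, hi2, hi3⟩ <;>
    rcases (by omega : (j : ℕ) = 0 ∨ (j : ℕ) = 1 ∨ (j : ℕ) = 2 ∨ (j : ℕ) = (q : ℕ) ∨ ((j : ℕ) ≠ 0 ∧ (j : ℕ) ≠ 1 ∧ (j : ℕ) ≠ 2 ∧ (j : ℕ) ≠ (q : ℕ))) with hj|hj|hj|hj|⟨hj0, hj1, hj2, hj3⟩ <;>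
    simp_all
  · have hmi' : (m : ℕ) ≠ (i : ℕ) := fun h => hmi (Fin.val_injective h)
    have hmj' : (m : ℕ) ≠ (j : ℕ) := fun h => hmj (Fin.val_injective h)
    rw [Cf_tau _ _ i j m hij hmi hmj]
    try rw [Cf_tau _ _ i j m hij hmi hmj]
    simp only [Finsupp.sub_apply, sgl_apply', e1, e2, e3]
    rcases (by omega : (i : ℕ) = 0 ∨ (i : ℕ) = 1 ∨ (i : ℕ) = 2 ∨ (i : ℕ) = (q : ℕ) ∨ ((i : ℕ) ≠ 0 ∧ (i : ℕ) ≠ 1 ∧ (i : ℕ) ≠ 2 ∧ (i : ℕ) ≠ (q : ℕ))) with hi|hi|hi|hi|⟨hi0, hi1, hi2, hi3⟩ <;>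
    rcases (by omega : (j : ℕ) = 0 ∨ (j : ℕ) = 1 ∨ (j : ℕ) = 2 ∨ (j : ℕ) = (q : ℕ) ∨ ((j : ℕ) ≠ 0 ∧ (j : ℕ) ≠ 1 ∧ (j : ℕ) ≠ 2 ∧ (j : ℕ) ≠ (q : ℕ))) with hj|hj|hj|hj|⟨hj0, hj1, hj2, hj3⟩ <;>
    rcases (by omega : (m : ℕ) = 0 ∨ (m : ℕ) = 1 ∨ (m : ℕ) = 2 ∨ (m : ℕ) = (q : ℕ) ∨ ((m : ℕ) ≠ 0 ∧ (m : ℕ) ≠ 1 ∧ (m : ℕ) ≠ 2 ∧ (m : ℕ) ≠ (q : ℕ))) with hm|hm|hm|hm|⟨hm0, hm1, hm2, hm3⟩ <;>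
    simp_all

set_option maxHeartbeats 1000000 in
lemma annBq3 (i1 i2 i3 : Fin n) (e1 : (i1 : ℕ) = 0) (e2 : (i2 : ℕ) = 1) (e3 : (i3 : ℕ) = 2)
    (n21 : i2 ≠ i1) (n31 : i3 ≠ i1) (n12 : i1 ≠ i2) (n32 : i3 ≠ i2) (n13 : i1 ≠ i3) (n23 : i2 ≠ i3)
    (q : Fin n) (vq0 : (q : ℕ) ≠ 0) (vq1 : (q : ℕ) ≠ 1) (vq2 : (q : ℕ) ≠ 2) (nq1 : q ≠ i1) (nq2 : q ≠ i2) (nq3 : q ≠ i3) (n1q : i1 ≠ q) (n2q : i2 ≠ q) (n3q : i3 ≠ q) :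
    ∀ g ∈ resGens k n, Cf ⟨(i2, i1), n21⟩ ⟨(q, i3), nq3⟩ g
      + (0 : k) * Cf ⟨(i2, i1), n21⟩ ⟨(q, i3), nq3⟩ g = 0 := by
  have wq0 : (0 : ℕ) ≠ (q : ℕ) := fun h => vq0 h.symm
  have wq1 : (1 : ℕ) ≠ (q : ℕ) := fun h => vq1 h.symm
  have wq2 : (2 : ℕ) ≠ (q : ℕ) := fun h => vq2 h.symm
  rintro g (⟨i, j, hij, rfl⟩ | ⟨i, j, m, hij, hmi, hmj, rfl⟩) <;>
    have hij' : (i : ℕ) < (j : ℕ) := hij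
  · simp only [egen_eq, Cf_ιι]
    simp only [sgl_apply', e1, e2, e3]
    rcases (by omega : (i : ℕ) = 0 ∨ (i : ℕ) = 1 ∨ (i : ℕ) = 2 ∨ (i : ℕ) = (q : ℕ) ∨ ((i : ℕ) ≠ 0 ∧ (i : ℕ) ≠ 1 ∧ (i : ℕ) ≠ 2 ∧ (i : ℕ) ≠ (q : ℕ))) with hi|hi|hi|hi|⟨hi0, hi1, hi2, hi3⟩ <;>
    rcases (by omega : (j : ℕ) = 0 ∨ (j : ℕ) = 1 ∨ (j : ℕ) = 2 ∨ (j : ℕ) = (q : ℕ) ∨ ((j : ℕ) ≠ 0 ∧ (j : ℕ) ≠ 1 ∧ (j : ℕ) ≠ 2 ∧ (j : ℕ) ≠ (q : ℕ))) with hj|hj|hj|hj|⟨hj0, hj1, hj2, hj3⟩ <;>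
    simp_all
  · have hmi' : (m : ℕ) ≠ (i : ℕ) := fun h => hmi (Fin.val_injective h)
    have hmj' : (m : ℕ) ≠ (j : ℕ) := fun h => hmj (Fin.val_injective h)
    rw [Cf_tau _ _ i j m hij hmi hmj]
    try rw [Cf_tau _ _ i j m hij hmi hmj]
    simp only [Finsupp.sub_apply, sgl_apply', e1, e2, e3]
    rcases (by omega : (i : ℕ) = 0 ∨ (i : ℕ) = 1 ∨ (i : ℕ) = 2 ∨ (i : ℕ) = (q : ℕ) ∨ ((i : ℕ) ≠ 0 ∧ (i : ℕ) ≠ 1 ∧ (i : ℕ) ≠ 2 ∧ (i : ℕ) ≠ (q : ℕ))) with hi|hi|hi|hi|⟨hi0, hi1, hi2, hi3⟩ <;>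
    rcases (by omega : (j : ℕ) = 0 ∨ (j : ℕ) = 1 ∨ (j : ℕ) = 2 ∨ (j : ℕ) = (q : ℕ) ∨ ((j : ℕ) ≠ 0 ∧ (j : ℕ) ≠ 1 ∧ (j : ℕ) ≠ 2 ∧ (j : ℕ) ≠ (q : ℕ))) with hj|hj|hj|hj|⟨hj0, hj1, hj2, hj3⟩ <;>
    rcases (by omega : (m : ℕ) = 0 ∨ (m : ℕ) = 1 ∨ (m : ℕ) = 2 ∨ (m : ℕ) = (q : ℕ) ∨ ((m : ℕ) ≠ 0 ∧ (m : ℕ) ≠ 1 ∧ (m : ℕ) ≠ 2 ∧ (m : ℕ) ≠ (q : ℕ))) with hm|hm|hm|hm|⟨hm0, hm1, hm2, hm3⟩ <;>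
    simp_all

set_option maxHeartbeats 1000000 in
lemma annBpq (i1 i2 i3 : Fin n) (e1 : (i1 : ℕ) = 0) (e2 : (i2 : ℕ) = 1) (e3 : (i3 : ℕ) = 2)
    (n21 : i2 ≠ i1) (n31 : i3 ≠ i1) (n12 : i1 ≠ i2) (n32 : i3 ≠ i2) (n13 : i1 ≠ i3) (n23 : i2 ≠ i3)
    (q : Fin n) (vq0 : (q : ℕ) ≠ 0) (vq1 : (q : ℕ) ≠ 1) (vq2 : (q : ℕ) ≠ 2) (nq1 : q ≠ i1) (nq2 : q ≠ i2) (nq3 : q ≠ i3) (n1q : i1 ≠ q) (n2q : i2 ≠ q) (n3q : i3 ≠ q)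
    (p : Fin n) (vp0 : (p : ℕ) ≠ 0) (vp1 : (p : ℕ) ≠ 1) (vp2 : (p : ℕ) ≠ 2) (npq : p ≠ q) :
    ∀ g ∈ resGens k n, Cf ⟨(i2, i1), n21⟩ ⟨(p, q), npq⟩ g
      + (0 : k) * Cf ⟨(i2, i1), n21⟩ ⟨(p, q), npq⟩ g = 0 := by
  have wq0 : (0 : ℕ) ≠ (q : ℕ) := fun h => vq0 h.symm
  have wq1 : (1 : ℕ) ≠ (q : ℕ) := fun h => vq1 h.symm
  have wq2 : (2 : ℕ) ≠ (q : ℕ) := fun h => vq2 h.symm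
  have wp0 : (0 : ℕ) ≠ (p : ℕ) := fun h => vp0 h.symm
  have wp1 : (1 : ℕ) ≠ (p : ℕ) := fun h => vp1 h.symm
  have wp2 : (2 : ℕ) ≠ (p : ℕ) := fun h => vp2 h.symm
  have wpq : (p : ℕ) ≠ (q : ℕ) := fun h => npq (Fin.val_injective h)
  have wqp : (q : ℕ) ≠ (p : ℕ) := fun h => npq (Fin.val_injective h.symm)
  rintro g (⟨i, j, hij, rfl⟩ | ⟨i, j, m, hij, hmi, hmj, rfl⟩) <;>
    have hij' : (i : ℕ) < (j : ℕ) := hij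
  · simp only [egen_eq, Cf_ιι]
    simp only [sgl_apply', e1, e2, e3]
    rcases (by omega : (i : ℕ) = 0 ∨ (i : ℕ) = 1 ∨ (i : ℕ) = 2 ∨ (i : ℕ) = (q : ℕ) ∨ (i : ℕ) = (p : ℕ) ∨ ((i : ℕ) ≠ 0 ∧ (i : ℕ) ≠ 1 ∧ (i : ℕ) ≠ 2 ∧ (i : ℕ) ≠ (q : ℕ) ∧ (i : ℕ) ≠ (p : ℕ))) with hi|hi|hi|hi|hi|⟨hi0, hi1, hi2, hi3, hi4⟩ <;>
    rcases (by omega : (j : ℕ) = 0 ∨ (j : ℕ) = 1 ∨ (j : ℕ) = 2 ∨ (j : ℕ) = (q : ℕ) ∨ (j : ℕ) = (p : ℕ) ∨ ((j : ℕ) ≠ 0 ∧ (j : ℕ) ≠ 1 ∧ (j : ℕ) ≠ 2 ∧ (j : ℕ) ≠ (q : ℕ) ∧ (j : ℕ) ≠ (p : ℕ))) with hj|hj|hj|hj|hj|⟨hj0, hj1, hj2, hj3, hj4⟩ <;>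
    simp_all
  · have hmi' : (m : ℕ) ≠ (i : ℕ) := fun h => hmi (Fin.val_injective h)
    have hmj' : (m : ℕ) ≠ (j : ℕ) := fun h => hmj (Fin.val_injective h)
    rw [Cf_tau _ _ i j m hij hmi hmj]
    try rw [Cf_tau _ _ i j m hij hmi hmj]
    simp only [Finsupp.sub_apply, sgl_apply', e1, e2, e3]
    rcases (by omega : (i : ℕ) = 0 ∨ (i : ℕ) = 1 ∨ (i : ℕ) = 2 ∨ (i : ℕ) = (q : ℕ) ∨ (i : ℕ) = (p : ℕ) ∨ ((i : ℕ) ≠ 0 ∧ (i : ℕ) ≠ 1 ∧ (i : ℕ) ≠ 2 ∧ (i : ℕ) ≠ (q : ℕ) ∧ (i : ℕ) ≠ (p : ℕ))) with hi|hi|hi|hi|hi|⟨hi0, hi1, hi2, hi3, hi4⟩ <;>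
    rcases (by omega : (j : ℕ) = 0 ∨ (j : ℕ) = 1 ∨ (j : ℕ) = 2 ∨ (j : ℕ) = (q : ℕ) ∨ (j : ℕ) = (p : ℕ) ∨ ((j : ℕ) ≠ 0 ∧ (j : ℕ) ≠ 1 ∧ (j : ℕ) ≠ 2 ∧ (j : ℕ) ≠ (q : ℕ) ∧ (j : ℕ) ≠ (p : ℕ))) with hj|hj|hj|hj|hj|⟨hj0, hj1, hj2, hj3, hj4⟩ <;>
    rcases (by omega : (m : ℕ) = 0 ∨ (m : ℕ) = 1 ∨ (m : ℕ) = 2 ∨ (m : ℕ) = (q : ℕ) ∨ (m : ℕ) = (p : ℕ) ∨ ((m : ℕ) ≠ 0 ∧ (m : ℕ) ≠ 1 ∧ (m : ℕ) ≠ 2 ∧ (m : ℕ) ≠ (q : ℕ) ∧ (m : ℕ) ≠ (p : ℕ))) with hm|hm|hm|hm|hm|⟨hm0, hm1, hm2, hm3, hm4⟩ <;>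
    simp_all


end Case2Aux
namespace Case2Aux

variable {k : Type} [Field k] {n : ℕ}

/-- If `z ∈ ⋀²` and `ι v * z = 0` with `v ≠ 0`, then `z = ι v * ι w` for some `w`. -/
lemma exists_w (γ0 : RIdx n) {v : RIdx n →₀ k} (hv : v γ0 ≠ 0)
    {z : Egen k n} (hz2 : z ∈ ⋀[k]^2 (RIdx n →₀ k))
    (hza : ExteriorAlgebra.ι k v * z = 0) :
    ∃ w : RIdx n →₀ k, z = ExteriorAlgebra.ι k v * ExteriorAlgebra.ι k w := by
  set d : Module.Dual k (RIdx n →₀ k) := (v γ0)⁻¹ • ph γ0 with hd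
  have hdv : d v = 1 := by
    simp [hd, LinearMap.smul_apply, ph_apply, smul_eq_mul, inv_mul_cancel₀ hv]
  have h0 : cL d (ExteriorAlgebra.ι k v * z) = 0 := by rw [hza, map_zero]
  rw [cL_ι_mul, hdv, one_smul] at h0
  have hz : z = ExteriorAlgebra.ι k v * cL d z := sub_eq_zero.mp h0
  have hmem : cL d z ∈ LinearMap.range (ExteriorAlgebra.ι k (M := RIdx n →₀ k)) := by
    have h2 : z ∈ LinearMap.range (ExteriorAlgebra.ι k (M := RIdx n →₀ k)) *
        LinearMap.range (ExteriorAlgebra.ι k (M := RIdx n →₀ k)) := by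
      rw [← pow_two]; exact hz2
    refine Submodule.mul_induction_on (C := fun x =>
      cL d x ∈ LinearMap.range (ExteriorAlgebra.ι k (M := RIdx n →₀ k))) h2 ?_ ?_
    · rintro x ⟨s, rfl⟩ y ⟨t, rfl⟩
      refine ⟨d s • t - d t • s, ?_⟩
      rw [map_sub, map_smul, map_smul, cL_ι_mul, cL_ι, mul_algebraMap_eq_smul]
    · rintro x y ⟨u, hu⟩ ⟨u', hu'⟩
      exact ⟨u + u', by rw [map_add, hu, hu', map_add]⟩
  obtain ⟨w, hw⟩ := hmem
  exact ⟨w, by rw [hz, ← hw]⟩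

end Case2Aux

lemma case2_core {k : Type} [Field k]
    (a12 a21 a13 a31 a23 a32 b12 b21 b13 b31 b23 b32 : k)
    (R13 : a12 * b32 - a32 * b12 = 0)
    (R14 : a21 * b31 - a31 * b21 = 0)
    (R15 : a13 * b23 - a23 * b13 = 0)
    (R45 : (a31 * b32 - a32 * b31) - (a12 * b31 - a31 * b12) = 0)
    (R46 : (a31 * b32 - a32 * b31) + (a21 * b32 - a32 * b21) = 0)
    (R78 : (a21 * b23 - a23 * b21) + (a21 * b13 - a13 * b21) = 0)
    (R79 : (a21 * b23 - a23 * b21) + (a31 * b23 - a23 * b31) = 0)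
    (R1011 : (a13 * b32 - a32 * b13) - (a12 * b13 - a13 * b12) = 0)
    (R1012 : (a13 * b32 - a32 * b13) + (a12 * b23 - a23 * b12) = 0)
    (h21 : a21 ≠ 0)
    (hP : a13 ≠ 0 ∨ a31 ≠ 0 ∨ a23 ≠ 0 ∨ a32 ≠ 0)
    (hQ : a21 + a31 ≠ 0 ∨ a12 + a32 ≠ 0 ∨ a13 + a23 ≠ 0) :
    ∃ t : k, b12 = t * a12 ∧ b21 = t * a21 ∧ b13 = t * a13 ∧ b31 = t * a31 ∧
      b23 = t * a23 ∧ b32 = t * a32 := by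
  set t := b21 / a21 with ht
  refine ⟨t, ?_⟩
  set B12 := b12 - t * a12 with h12
  set B13 := b13 - t * a13 with h13
  set B31 := b31 - t * a31 with h31
  set B23 := b23 - t * a23 with h23
  set B32 := b32 - t * a32 with h32
  have hB21 : b21 - t * a21 = 0 := by rw [ht]; field_simp; ring
  suffices h : B12 = 0 ∧ B13 = 0 ∧ B31 = 0 ∧ B23 = 0 ∧ B32 = 0 by
    obtain ⟨u1, u2, u3, u4, u5⟩ := h
    exact ⟨by linear_combination u1, by linear_combination hB21, by linear_combination u2,
      by linear_combination u3, by linear_combination u4, by linear_combination u5⟩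
  have hB31 : B31 = 0 := by
    rcases mul_eq_zero.mp (show a21 * B31 = 0 by
      linear_combination R14 + a31 * hB21) with h | h
    · exact absurd h h21
    · exact h
  have hsum : B23 = -B13 := by
    rcases mul_eq_zero.mp (show a21 * (B23 + B13) = 0 by
      linear_combination R78 + (a23 + a13) * hB21) with h | h
    · exact absurd h h21
    · linear_combination h
  have r79 : (a21 + a31) * B23 = 0 := by
    linear_combination R79 + a23 * hB21 + a23 * hB31
  have r15 : (a13 + a23) * B23 = 0 := by
    linear_combination R15 + a23 * hsum
  have r46 : (a21 + a31) * B32 = 0 := by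
    linear_combination R46 + a32 * hB21 + a32 * hB31
  have r45 : a31 * (B32 + B12) = 0 := by
    linear_combination R45 + (a32 + a12) * hB31
  have r13 : a12 * B32 - a32 * B12 = 0 := by linear_combination R13
  have r1011 : a13 * (B32 + B12) - (a12 + a32) * B13 = 0 := by linear_combination R1011
  have rH : (a13 + a23) * B12 = 0 := by
    linear_combination r1011 - (R1012 - a12 * hsum)
  by_cases hq1 : a21 + a31 ≠ 0
  · have hB23 : B23 = 0 := by
      rcases mul_eq_zero.mp r79 with h | h
      · exact absurd h hq1
      · exact h
    have hB13 : B13 = 0 := by linear_combination hsum - hB23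
    have hB32 : B32 = 0 := by
      rcases mul_eq_zero.mp r46 with h | h
      · exact absurd h hq1
      · exact h
    have hB12 : B12 = 0 := by
      by_contra hne
      have ha31 : a31 = 0 := by
        rcases mul_eq_zero.mp (show a31 * B12 = 0 by
          linear_combination r45 - a31 * hB32) with h | h
        · exact h
        · exact absurd h hne
      have ha32 : a32 = 0 := by
        rcases mul_eq_zero.mp (show a32 * B12 = 0 by
          linear_combination a12 * hB32 - r13) with h | h
        · exact h
        · exact absurd h hne
      have ha13 : a13 = 0 := by
        rcases mul_eq_zero.mp (show a13 * B12 = 0 by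
          linear_combination r1011 - a13 * hB32 + (a12 + a32) * hB13) with h | h
        · exact h
        · exact absurd h hne
      have ha23 : a23 = 0 := by
        rcases mul_eq_zero.mp (show a23 * B12 = 0 by
          linear_combination rH - B12 * ha13) with h | h
        · exact h
        · exact absurd h hne
      rcases hP with h | h | h | h
      · exact h ha13
      · exact h ha31
      · exact h ha23
      · exact h ha32
    exact ⟨hB12, hB13, hB31, hB23, hB32⟩
  · push_neg at hq1
    have ha31ne : a31 ≠ 0 := by
      intro h
      exact h21 (by linear_combination hq1 - h)
    by_cases hq3 : a13 + a23 ≠ 0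
    · have hB23 : B23 = 0 := by
        rcases mul_eq_zero.mp r15 with h | h
        · exact absurd h hq3
        · exact h
      have hB13 : B13 = 0 := by linear_combination hsum - hB23
      have hB12 : B12 = 0 := by
        rcases mul_eq_zero.mp rH with h | h
        · exact absurd h hq3
        · exact h
      have hB32 : B32 = 0 := by
        rcases mul_eq_zero.mp (show a31 * B32 = 0 by
          linear_combination r45 - a31 * hB12) with h | h
        · exact absurd h ha31ne
        · exact h
      exact ⟨hB12, hB13, hB31, hB23, hB32⟩
    · push_neg at hq3
      have hq2 : a12 + a32 ≠ 0 := by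
        rcases hQ with h | h | h
        · exact absurd hq1 h
        · exact h
        · exact absurd hq3 h
      have hBsum : B32 = -B12 := by
        rcases mul_eq_zero.mp r45 with h | h
        · exact absurd h ha31ne
        · linear_combination h
      have hB12 : B12 = 0 := by
        rcases mul_eq_zero.mp (show (a12 + a32) * B12 = 0 by
          linear_combination a12 * hBsum - r13) with h | h
        · exact absurd h hq2
        · exact h
      have hB32 : B32 = 0 := by linear_combination hBsum - hB12
      have hB13 : B13 = 0 := by
        rcases mul_eq_zero.mp (show (a12 + a32) * B13 = 0 by
          linear_combination a13 * hBsum - r1011) with h | h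
        · exact absurd h hq2
        · exact h
      have hB23 : B23 = 0 := by linear_combination hsum - hB13
      exact ⟨hB12, hB13, hB31, hB23, hB32⟩
open Case2Aux in
set_option maxHeartbeats 1000000 in
/-- **Case 2, supported on `{1,2,3}`.** -/
theorem case2_supported_psi_injective
    (k : Type) [Field k] [IsAlgClosed k] [CharZero k] (n : ℕ) (hn : 3 ≤ n)
    (i1 i2 i3 : Fin n) (e1 : (i1 : ℕ) = 0) (e2 : (i2 : ℕ) = 1) (e3 : (i3 : ℕ) = 2)
    (n21 : i2 ≠ i1) (n31 : i3 ≠ i1) (n12 : i1 ≠ i2)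
    (n32 : i3 ≠ i2) (n13 : i1 ≠ i3) (n23 : i2 ≠ i3)
    (v : RIdx n →₀ k)
    (hsupp : ∀ x : RIdx n,
      ¬ (({x.1.1, x.1.2} : Finset (Fin n)) ⊆ {i1, i2, i3}) → v x = 0)
    (h21 : v ⟨(i2, i1), n21⟩ ≠ 0)
    (hpq : ∃ x : RIdx n, ({x.1.1, x.1.2} : Finset (Fin n)) ⊆ {i1, i2, i3} ∧
      ({x.1.1, x.1.2} : Finset (Fin n)) ≠ {i1, i2} ∧ v x ≠ 0)
    (hsum : v ⟨(i2, i1), n21⟩ + v ⟨(i3, i1), n31⟩ ≠ 0 ∨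
      v ⟨(i1, i2), n12⟩ + v ⟨(i3, i2), n32⟩ ≠ 0 ∨
      v ⟨(i1, i3), n13⟩ + v ⟨(i2, i3), n23⟩ ≠ 0) :
    Function.Injective (resPsi k n (ExteriorAlgebra.ι k v)) := by
  classical
  have vT : ∀ p : Fin n, (p = i1 ∨ p = i2 ∨ p = i3) ↔
      ((p : ℕ) = 0 ∨ (p : ℕ) = 1 ∨ (p : ℕ) = 2) := by
    intro p
    rw [Fin.ext_iff, Fin.ext_iff, Fin.ext_iff, e1, e2, e3]
  have subT : ∀ x : RIdx n, (({x.1.1, x.1.2} : Finset (Fin n)) ⊆ {i1, i2, i3}) ↔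
      ((x.1.1 = i1 ∨ x.1.1 = i2 ∨ x.1.1 = i3) ∧ (x.1.2 = i1 ∨ x.1.2 = i2 ∨ x.1.2 = i3)) := by
    intro x
    simp [Finset.insert_subset_iff]
  have vbad : ∀ x : RIdx n, (((x.1.1 : ℕ) ≠ 0 ∧ (x.1.1 : ℕ) ≠ 1 ∧ (x.1.1 : ℕ) ≠ 2) ∨
      ((x.1.2 : ℕ) ≠ 0 ∧ (x.1.2 : ℕ) ≠ 1 ∧ (x.1.2 : ℕ) ≠ 2)) → v x = 0 := by
    intro x hx
    refine hsupp x ?_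
    rw [subT]
    rintro ⟨h1, h2⟩
    rw [vT] at h1 h2
    rcases hx with ⟨u0, u1, u2⟩ | ⟨u0, u1, u2⟩ <;> omega
  suffices hker : ∀ zz : ↥(resI2 k n), resPsi k n (ExteriorAlgebra.ι k v) zz = 0 → zz = 0 by
    intro x y hxy
    have h := hker (x - y) (by rw [map_sub, hxy, sub_self])
    exact sub_eq_zero.mp h
  intro zz hzz
  have hmem : (zz : Egen k n) ∈ resIdealSub k n ⊓ ⋀[k]^2 (RIdx n →₀ k) := zz.2
  obtain ⟨hzI', hz2⟩ := Submodule.mem_inf.mp hmem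
  set z := (zz : Egen k n) with hzdef
  have hzI : z ∈ resIdeal k n := hzI'
  have hza : ExteriorAlgebra.ι k v * z = 0 := hzz
  obtain ⟨w, hzw⟩ := Case2Aux.exists_w ⟨(i2, i1), n21⟩ h21 hz2 hza
  have hD : ∀ α β : RIdx n, Cf α β z = v α * w β - w α * v β := by
    intro α β; rw [hzw, Cf_ιι]
  -- single-functional helper
  have hsingle : ∀ β : RIdx n, v β = 0 →
      (∀ g ∈ resGens k n, Cf ⟨(i2, i1), n21⟩ β g + (0 : k) * Cf ⟨(i2, i1), n21⟩ β g = 0) →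
      w β = 0 := by
    intro β hvβ hann
    have h := ideal_ann _ _ _ _ 0 hann z hzI
    simp only [hD, hvβ] at h
    have h2 : v ⟨(i2, i1), n21⟩ * w β = 0 := by linear_combination h
    rcases mul_eq_zero.mp h2 with hc | hc
    · exact absurd hc h21
    · exact hc
  -- elimination of the bad coordinates of w
  have hw2q : ∀ (q : Fin n) (u0 : (q : ℕ) ≠ 0) (u1 : (q : ℕ) ≠ 1) (u2 : (q : ℕ) ≠ 2)
      (hn : i2 ≠ q), w ⟨(i2, q), hn⟩ = 0 := by
    intro q u0 u1 u2 hn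
    have nq1 : q ≠ i1 := fun h => u0 (by rw [h, e1])
    have nq2 : q ≠ i2 := fun h => u1 (by rw [h, e2])
    have nq3 : q ≠ i3 := fun h => u2 (by rw [h, e3])
    have h := ideal_ann _ _ _ _ 1
      (annB2q i1 i2 i3 e1 e2 e3 n21 n31 n12 n32 n13 n23 q u0 u1 u2 nq1 nq2 nq3
        nq1.symm hn nq3.symm) z hzI
    have hv2q : v ⟨(i2, q), hn⟩ = 0 := vbad _ (Or.inr ⟨u0, u1, u2⟩)
    have hvq1 : v ⟨(q, i1), nq1⟩ = 0 := vbad _ (Or.inl ⟨u0, u1, u2⟩)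
    simp only [hD, hv2q, hvq1] at h
    have h2 : v ⟨(i2, i1), n21⟩ * w ⟨(i2, q), hn⟩ = 0 := by linear_combination h
    rcases mul_eq_zero.mp h2 with hc | hc
    · exact absurd hc h21
    · exact hc
  have hw1q : ∀ (q : Fin n) (u0 : (q : ℕ) ≠ 0) (u1 : (q : ℕ) ≠ 1) (u2 : (q : ℕ) ≠ 2)
      (hn : i1 ≠ q), w ⟨(i1, q), hn⟩ = 0 := by
    intro q u0 u1 u2 hn
    have nq1 : q ≠ i1 := fun h => u0 (by rw [h, e1])
    have nq2 : q ≠ i2 := fun h => u1 (by rw [h, e2])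
    have nq3 : q ≠ i3 := fun h => u2 (by rw [h, e3])
    have h := ideal_ann _ _ _ _ 1
      (annB1q i1 i2 i3 e1 e2 e3 n21 n31 n12 n32 n13 n23 q u0 u1 u2 nq1 nq2 nq3
        hn nq2.symm nq3.symm) z hzI
    have hv1q : v ⟨(i1, q), hn⟩ = 0 := vbad _ (Or.inr ⟨u0, u1, u2⟩)
    have hv2q : v ⟨(i2, q), nq2.symm⟩ = 0 := vbad _ (Or.inr ⟨u0, u1, u2⟩)
    have hw2q' := hw2q q u0 u1 u2 nq2.symm
    simp only [hD, hv1q, hv2q, hw2q'] at h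
    have h2 : v ⟨(i2, i1), n21⟩ * w ⟨(i1, q), hn⟩ = 0 := by linear_combination h
    rcases mul_eq_zero.mp h2 with hc | hc
    · exact absurd hc h21
    · exact hc
  have hw3q : ∀ (q : Fin n) (u0 : (q : ℕ) ≠ 0) (u1 : (q : ℕ) ≠ 1) (u2 : (q : ℕ) ≠ 2)
      (hn : i3 ≠ q), w ⟨(i3, q), hn⟩ = 0 := by
    intro q u0 u1 u2 hn
    have nq1 : q ≠ i1 := fun h => u0 (by rw [h, e1])
    have nq2 : q ≠ i2 := fun h => u1 (by rw [h, e2])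
    have nq3 : q ≠ i3 := fun h => u2 (by rw [h, e3])
    exact hsingle _ (vbad _ (Or.inr ⟨u0, u1, u2⟩))
      (annB3q i1 i2 i3 e1 e2 e3 n21 n31 n12 n32 n13 n23 q u0 u1 u2 nq1 nq2 nq3
        nq1.symm nq2.symm hn)
  have hwq1 : ∀ (q : Fin n) (u0 : (q : ℕ) ≠ 0) (u1 : (q : ℕ) ≠ 1) (u2 : (q : ℕ) ≠ 2)
      (hn : q ≠ i1), w ⟨(q, i1), hn⟩ = 0 := by
    intro q u0 u1 u2 hn
    have nq2 : q ≠ i2 := fun h => u1 (by rw [h, e2])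
    have nq3 : q ≠ i3 := fun h => u2 (by rw [h, e3])
    exact hsingle _ (vbad _ (Or.inl ⟨u0, u1, u2⟩))
      (annBq1 i1 i2 i3 e1 e2 e3 n21 n31 n12 n32 n13 n23 q u0 u1 u2 hn nq2 nq3
        hn.symm nq2.symm nq3.symm)
  have hwq2 : ∀ (q : Fin n) (u0 : (q : ℕ) ≠ 0) (u1 : (q : ℕ) ≠ 1) (u2 : (q : ℕ) ≠ 2)
      (hn : q ≠ i2), w ⟨(q, i2), hn⟩ = 0 := by
    intro q u0 u1 u2 hn
    have nq1 : q ≠ i1 := fun h => u0 (by rw [h, e1])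
    have nq3 : q ≠ i3 := fun h => u2 (by rw [h, e3])
    have h := ideal_ann _ _ _ _ 1
      (annBq2 i1 i2 i3 e1 e2 e3 n21 n31 n12 n32 n13 n23 q u0 u1 u2 nq1 hn nq3
        nq1.symm hn.symm nq3.symm) z hzI
    have hvq2 : v ⟨(q, i2), hn⟩ = 0 := vbad _ (Or.inl ⟨u0, u1, u2⟩)
    have hvq1 : v ⟨(q, i1), nq1⟩ = 0 := vbad _ (Or.inl ⟨u0, u1, u2⟩)
    simp only [hD, hvq2, hvq1] at h
    have h2 : v ⟨(i2, i1), n21⟩ * w ⟨(q, i2), hn⟩ = 0 := by linear_combination h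
    rcases mul_eq_zero.mp h2 with hc | hc
    · exact absurd hc h21
    · exact hc
  have hwq3 : ∀ (q : Fin n) (u0 : (q : ℕ) ≠ 0) (u1 : (q : ℕ) ≠ 1) (u2 : (q : ℕ) ≠ 2)
      (hn : q ≠ i3), w ⟨(q, i3), hn⟩ = 0 := by
    intro q u0 u1 u2 hn
    have nq1 : q ≠ i1 := fun h => u0 (by rw [h, e1])
    have nq2 : q ≠ i2 := fun h => u1 (by rw [h, e2])
    exact hsingle _ (vbad _ (Or.inl ⟨u0, u1, u2⟩))
      (annBq3 i1 i2 i3 e1 e2 e3 n21 n31 n12 n32 n13 n23 q u0 u1 u2 nq1 nq2 hn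
        nq1.symm nq2.symm hn.symm)
  have hwpq : ∀ (p q : Fin n) (u0 : (q : ℕ) ≠ 0) (u1 : (q : ℕ) ≠ 1) (u2 : (q : ℕ) ≠ 2)
      (w0 : (p : ℕ) ≠ 0) (w1 : (p : ℕ) ≠ 1) (w2 : (p : ℕ) ≠ 2)
      (hn : p ≠ q), w ⟨(p, q), hn⟩ = 0 := by
    intro p q u0 u1 u2 w0 w1 w2 hn
    have nq1 : q ≠ i1 := fun h => u0 (by rw [h, e1])
    have nq2 : q ≠ i2 := fun h => u1 (by rw [h, e2])
    have nq3 : q ≠ i3 := fun h => u2 (by rw [h, e3])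
    exact hsingle _ (vbad _ (Or.inl ⟨w0, w1, w2⟩))
      (annBpq i1 i2 i3 e1 e2 e3 n21 n31 n12 n32 n13 n23 q u0 u1 u2 nq1 nq2 nq3
        nq1.symm nq2.symm nq3.symm p w0 w1 w2 hn)
  -- the nine good relations
  have hR13 := ideal_ann _ _ _ _ 0
    (annA13 i1 i2 i3 e1 e2 e3 n21 n31 n12 n32 n13 n23) z hzI
  have hR14 := ideal_ann _ _ _ _ 0
    (annA14 i1 i2 i3 e1 e2 e3 n21 n31 n12 n32 n13 n23) z hzI
  have hR15 := ideal_ann _ _ _ _ 0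
    (annA15 i1 i2 i3 e1 e2 e3 n21 n31 n12 n32 n13 n23) z hzI
  have hR45 := ideal_ann _ _ _ _ (-1)
    (ann45 i1 i2 i3 e1 e2 e3 n31 n32 n12) z hzI
  have hR46 := ideal_ann _ _ _ _ 1
    (annA46 i1 i2 i3 e1 e2 e3 n21 n31 n12 n32 n13 n23) z hzI
  have hR78 := ideal_ann _ _ _ _ 1
    (annA78 i1 i2 i3 e1 e2 e3 n21 n31 n12 n32 n13 n23) z hzI
  have hR79 := ideal_ann _ _ _ _ 1
    (annA79 i1 i2 i3 e1 e2 e3 n21 n31 n12 n32 n13 n23) z hzI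
  have hR1011 := ideal_ann _ _ _ _ (-1)
    (annA1011 i1 i2 i3 e1 e2 e3 n21 n31 n12 n32 n13 n23) z hzI
  have hR1012 := ideal_ann _ _ _ _ 1
    (annA1012 i1 i2 i3 e1 e2 e3 n21 n31 n12 n32 n13 n23) z hzI
  simp only [hD] at hR13 hR14 hR15 hR45 hR46 hR78 hR79 hR1011 hR1012
  -- the hypothesis `P`
  have hP : v ⟨(i1, i3), n13⟩ ≠ 0 ∨ v ⟨(i3, i1), n31⟩ ≠ 0 ∨
      v ⟨(i2, i3), n23⟩ ≠ 0 ∨ v ⟨(i3, i2), n32⟩ ≠ 0 := by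
    obtain ⟨x, hxsub, hxne, hxv⟩ := hpq
    rw [subT] at hxsub
    have hx6 : x = (⟨(i1, i2), n12⟩ : RIdx n) ∨ x = ⟨(i2, i1), n21⟩ ∨ x = ⟨(i1, i3), n13⟩ ∨
        x = ⟨(i3, i1), n31⟩ ∨ x = ⟨(i2, i3), n23⟩ ∨ x = ⟨(i3, i2), n32⟩ := by
      obtain ⟨⟨p, q⟩, hne⟩ := x
      obtain ⟨hp, hq⟩ := hxsub
      have hne2 : p ≠ q := hne
      rcases hp with hp | hp | hp <;> rcases hq with hq | hq | hq
      · exact absurd (hp.trans hq.symm) hne2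
      · exact Or.inl (Subtype.ext (Prod.ext_iff.mpr ⟨hp, hq⟩))
      · exact Or.inr (Or.inr (Or.inl (Subtype.ext (Prod.ext_iff.mpr ⟨hp, hq⟩))))
      · exact Or.inr (Or.inl (Subtype.ext (Prod.ext_iff.mpr ⟨hp, hq⟩)))
      · exact absurd (hp.trans hq.symm) hne2
      · exact Or.inr (Or.inr (Or.inr (Or.inr (Or.inl (Subtype.ext (Prod.ext_iff.mpr ⟨hp, hq⟩))))))
      · exact Or.inr (Or.inr (Or.inr (Or.inl (Subtype.ext (Prod.ext_iff.mpr ⟨hp, hq⟩)))))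
      · exact Or.inr (Or.inr (Or.inr (Or.inr (Or.inr (Subtype.ext (Prod.ext_iff.mpr ⟨hp, hq⟩))))))
      · exact absurd (hp.trans hq.symm) hne2
    rcases hx6 with rfl | rfl | rfl | rfl | rfl | rfl
    · exact absurd rfl hxne
    · exact absurd (Finset.pair_comm i2 i1) hxne
    · exact Or.inl hxv
    · exact Or.inr (Or.inl hxv)
    · exact Or.inr (Or.inr (Or.inl hxv))
    · exact Or.inr (Or.inr (Or.inr hxv))
  obtain ⟨t, u12, u21, u13, u31, u23, u32⟩ :=
    case2_core (v ⟨(i1, i2), n12⟩) (v ⟨(i2, i1), n21⟩) (v ⟨(i1, i3), n13⟩)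
      (v ⟨(i3, i1), n31⟩) (v ⟨(i2, i3), n23⟩) (v ⟨(i3, i2), n32⟩)
      (w ⟨(i1, i2), n12⟩) (w ⟨(i2, i1), n21⟩) (w ⟨(i1, i3), n13⟩)
      (w ⟨(i3, i1), n31⟩) (w ⟨(i2, i3), n23⟩) (w ⟨(i3, i2), n32⟩)
      (by linear_combination hR13) (by linear_combination hR14) (by linear_combination hR15)
      (by linear_combination hR45) (by linear_combination hR46) (by linear_combination hR78)
      (by linear_combination hR79) (by linear_combination hR1011) (by linear_combination hR1012)
      h21 hP hsum
  have hwv : w = t • v := by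
    ext γ
    obtain ⟨⟨p, q⟩, hne⟩ := γ
    rw [Finsupp.smul_apply, smul_eq_mul]
    have hne' : (p : ℕ) ≠ (q : ℕ) := fun h => hne (Fin.val_injective h)
    rcases (by omega : (p : ℕ) = 0 ∨ (p : ℕ) = 1 ∨ (p : ℕ) = 2 ∨
        ((p : ℕ) ≠ 0 ∧ (p : ℕ) ≠ 1 ∧ (p : ℕ) ≠ 2)) with hp | hp | hp | ⟨hp0, hp1, hp2⟩ <;>
      rcases (by omega : (q : ℕ) = 0 ∨ (q : ℕ) = 1 ∨ (q : ℕ) = 2 ∨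
        ((q : ℕ) ≠ 0 ∧ (q : ℕ) ≠ 1 ∧ (q : ℕ) ≠ 2)) with hq | hq | hq | ⟨hq0, hq1, hq2⟩
    · omega
    · have hp' : p = i1 := Fin.val_injective (by rw [hp, e1])
      have hq' : q = i2 := Fin.val_injective (by rw [hq, e2])
      subst hp'; subst hq'
      exact u12
    · have hp' : p = i1 := Fin.val_injective (by rw [hp, e1])
      have hq' : q = i3 := Fin.val_injective (by rw [hq, e3])
      subst hp'; subst hq'
      exact u13
    · have hp' : p = i1 := Fin.val_injective (by rw [hp, e1])
      subst hp'
      rw [hw1q q hq0 hq1 hq2 hne, vbad ⟨(p, q), hne⟩ (Or.inr ⟨hq0, hq1, hq2⟩), mul_zero]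
    · have hp' : p = i2 := Fin.val_injective (by rw [hp, e2])
      have hq' : q = i1 := Fin.val_injective (by rw [hq, e1])
      subst hp'; subst hq'
      exact u21
    · omega
    · have hp' : p = i2 := Fin.val_injective (by rw [hp, e2])
      have hq' : q = i3 := Fin.val_injective (by rw [hq, e3])
      subst hp'; subst hq'
      exact u23
    · have hp' : p = i2 := Fin.val_injective (by rw [hp, e2])
      subst hp'
      rw [hw2q q hq0 hq1 hq2 hne, vbad ⟨(p, q), hne⟩ (Or.inr ⟨hq0, hq1, hq2⟩), mul_zero]
    · have hp' : p = i3 := Fin.val_injective (by rw [hp, e3])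
      have hq' : q = i1 := Fin.val_injective (by rw [hq, e1])
      subst hp'; subst hq'
      exact u31
    · have hp' : p = i3 := Fin.val_injective (by rw [hp, e3])
      have hq' : q = i2 := Fin.val_injective (by rw [hq, e2])
      subst hp'; subst hq'
      exact u32
    · omega
    · have hp' : p = i3 := Fin.val_injective (by rw [hp, e3])
      subst hp'
      rw [hw3q q hq0 hq1 hq2 hne, vbad ⟨(p, q), hne⟩ (Or.inr ⟨hq0, hq1, hq2⟩), mul_zero]
    · have hq' : q = i1 := Fin.val_injective (by rw [hq, e1])
      subst hq'
      rw [hwq1 p hp0 hp1 hp2 hne, vbad ⟨(p, q), hne⟩ (Or.inl ⟨hp0, hp1, hp2⟩), mul_zero]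
    · have hq' : q = i2 := Fin.val_injective (by rw [hq, e2])
      subst hq'
      rw [hwq2 p hp0 hp1 hp2 hne, vbad ⟨(p, q), hne⟩ (Or.inl ⟨hp0, hp1, hp2⟩), mul_zero]
    · have hq' : q = i3 := Fin.val_injective (by rw [hq, e3])
      subst hq'
      rw [hwq3 p hp0 hp1 hp2 hne, vbad ⟨(p, q), hne⟩ (Or.inl ⟨hp0, hp1, hp2⟩), mul_zero]
    · rw [hwpq p q hq0 hq1 hq2 hp0 hp1 hp2 hne, vbad ⟨(p, q), hne⟩ (Or.inl ⟨hp0, hp1, hp2⟩), mul_zero]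
  have hz0 : z = 0 := by
    rw [hzw, hwv, map_smul, mul_smul_comm, ExteriorAlgebra.ι_sq_zero, smul_zero]
  exact Subtype.ext hz0
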